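/- arXiv:1808.10127 — 3 statements merged into one kernel-verified Lean document; each statement's English description precedes it below -/
import Mathlib

section
/- Let 0 < ξ ≤ 10⁻³ and let G be a bipartite graph with bipartition {V₁, V₂}, |V₁| = |V₂| = (2 + 8ξ)k′ (with k′ sufficiently large) and minimum degree δ(G) ≥ (7/8 + ξ)(2 + 8ξ)k′, whose edges are 2-colored red and blue. Let F₁ be a monochromatic connected component of G with the largest number of vertices, assume F₁ is red and contains no matching saturating at least (2 + 0.1ξ)k′ vertices, and let C = V(F₁). If |V_s \ C| ≥ (1/2)(1 + 4ξ)k′ and |C ∩ V_s| ≥ (1 + 4ξ)k′ for each s = 1, 2, then the spanning subgraph of blue edges of G contains a connected matching saturating at least (2 + 8ξ)k′ vertices. -/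
/-- The spanning subgraph of `G` consisting of the edges with color `i`,
given an edge coloring `χ` (on pairs of vertices) with `r` colors. -/
def colorSubgraph {V : Type*} {r : ℕ} (G : SimpleGraph V) (χ : Sym2 V → Fin r) (i : Fin r) :
    SimpleGraph V where
  Adj u v := G.Adj u v ∧ χ s(u, v) = i
  symm := ⟨fun u v h => ⟨h.1.symm, by rw [Sym2.eq_swap]; exact h.2⟩⟩
  loopless := ⟨fun u h => G.loopless.irrefl u h.1⟩

/-- `G` contains a cycle of length `m` (on `m` vertices) as a subgraph. -/
def HasCycleLength {V : Type*} (G : SimpleGraph V) (m : ℕ) : Prop :=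
  ∃ (v : V) (w : G.Walk v v), w.IsCycle ∧ w.length = m

/-- `G` contains a connected matching (all of whose edges lie in one connected
component of `G`) saturating at least `b` vertices. -/
def HasConnMatching {V : Type*} (G : SimpleGraph V) (b : ℝ) : Prop :=
  ∃ M : G.Subgraph, M.IsMatching ∧
    (∀ u ∈ M.verts, ∀ v ∈ M.verts, G.Reachable u v) ∧ b ≤ (M.verts.ncard : ℝ)

lemma common_mem_aux {V : Type*} (S : Finset V) (P Q : V → Prop)
    [DecidablePred P] [DecidablePred Q]
    (h : (S.filter fun x => ¬ P x).card + (S.filter fun x => ¬ Q x).card < S.card) :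
    ∃ x ∈ S, P x ∧ Q x := by
  have h1 : (S.filter fun x => P x).card + (S.filter fun x => ¬ P x).card = S.card :=
    Finset.card_filter_add_card_filter_not _
  have h2 : (S.filter fun x => ¬ Q x).card < (S.filter fun x => P x).card := by omega
  have h3 : ¬ (S.filter fun x => P x) ⊆ (S.filter fun x => ¬ Q x) :=
    fun hsub => absurd (Finset.card_le_card hsub) (by omega)
  obtain ⟨x, hx1, hx2⟩ := Finset.not_subset.1 h3
  have hx1' := Finset.mem_filter.1 hx1
  refine ⟨x, hx1'.1, hx1'.2, ?_⟩
  by_contra hq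
  exact hx2 (Finset.mem_filter.2 ⟨hx1'.1, hq⟩)

lemma exists_matching_finset {V : Type*} [Fintype V] [DecidableEq V]
    (H : SimpleGraph V) [DecidableRel H.Adj] (A B : Finset V) (hAB : Disjoint A B) (t : ℝ)
    (hA : A.card ≤ B.card) (h2t : 2 * t ≤ (B.card : ℝ))
    (hdA : ∀ a ∈ A, (((B.filter fun b => ¬ H.Adj a b)).card : ℝ) ≤ t)
    (hdB : ∀ b ∈ B, (((A.filter fun a => ¬ H.Adj b a)).card : ℝ) ≤ t) :
    ∃ M : H.Subgraph, M.IsMatching ∧ (↑A : Set V) ⊆ M.verts ∧ M.verts ⊆ ↑A ∪ ↑B ∧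
      M.verts.ncard = 2 * A.card := by
  have key : ∀ s : Finset ↥A, s.card ≤ (s.biUnion (fun a => B.filter (H.Adj ↑a))).card := by
    intro s
    rcases s.eq_empty_or_nonempty with rfl | ⟨a, ha⟩
    · simp
    rcases le_or_gt (s.card : ℝ) t with hs | hs
    · have h1 : B.filter (H.Adj ↑a) ⊆ s.biUnion (fun a => B.filter (H.Adj ↑a)) :=
        Finset.subset_biUnion_of_mem (fun a : ↥A => B.filter (H.Adj ↑a)) ha
      have h2 := Finset.card_le_card h1
      have h3 : (B.filter (H.Adj ↑a)).card + (B.filter fun b => ¬ H.Adj ↑a b).card = B.card :=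
        Finset.card_filter_add_card_filter_not _
      have h4 := hdA ↑a a.2
      have h5 : (s.card : ℝ) ≤ ((B.filter (H.Adj ↑a)).card : ℝ) := by
        have h6 : ((B.filter (H.Adj ↑a)).card : ℝ) + ((B.filter fun b => ¬ H.Adj ↑a b).card : ℝ)
            = (B.card : ℝ) := by exact_mod_cast congrArg Nat.cast h3
        linarith
      exact_mod_cast h5.trans (Nat.cast_le.2 h2)
    · have hB : B ⊆ s.biUnion (fun a => B.filter (H.Adj ↑a)) := by
        intro b hb
        have h4 := hdB b hb
        have hns : ¬ (s.image Subtype.val) ⊆ A.filter fun a => ¬ H.Adj b a := by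
          intro hsub
          have h5 := Finset.card_le_card hsub
          rw [Finset.card_image_of_injective _ Subtype.val_injective] at h5
          have : (s.card : ℝ) ≤ t := le_trans (Nat.cast_le.2 h5) h4
          linarith
        obtain ⟨x, hx1, hx2⟩ := Finset.not_subset.1 hns
        obtain ⟨a, has, rfl⟩ := Finset.mem_image.1 hx1
        have hadj : H.Adj ↑a b := by
          by_contra h
          exact hx2 (Finset.mem_filter.2 ⟨a.2, fun h' => h h'.symm⟩)
        exact Finset.mem_biUnion.2 ⟨a, has, Finset.mem_filter.2 ⟨hb, hadj⟩⟩
      calc s.card ≤ Fintype.card ↥A := (Finset.card_le_univ s).trans_eq Finset.card_univ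
        _ = A.card := Fintype.card_coe A
        _ ≤ B.card := hA
        _ ≤ _ := Finset.card_le_card hB
  obtain ⟨f, hfinj, hf⟩ := (Finset.all_card_le_biUnion_card_iff_existsInjective' _).1 key
  have hfB : ∀ a : ↥A, f a ∈ B := fun a => (Finset.mem_filter.1 (hf a)).1
  have hfadj : ∀ a : ↥A, H.Adj ↑a (f a) := fun a => (Finset.mem_filter.1 (hf a)).2
  have hfnA : ∀ a : ↥A, f a ∉ A := fun a h => (Finset.disjoint_left.1 hAB) h (hfB a)
  set Fn : Finset V := A.attach.image f with hFn
  have hFnB : ∀ x ∈ Fn, x ∈ B := by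
    intro x hx; obtain ⟨a, _, rfl⟩ := Finset.mem_image.1 hx; exact hfB a
  refine ⟨⟨↑A ∪ ↑Fn,
    fun x y => (∃ a : ↥A, ↑a = x ∧ f a = y) ∨ (∃ a : ↥A, ↑a = y ∧ f a = x), ?_, ?_, ?_⟩,
    ?_, ?_, ?_, ?_⟩
  · rintro x y (⟨a, rfl, rfl⟩ | ⟨a, rfl, rfl⟩)
    · exact hfadj a
    · exact (hfadj a).symm
  · rintro x y (⟨a, rfl, rfl⟩ | ⟨a, rfl, rfl⟩)
    · exact Or.inl a.2
    · exact Or.inr (Finset.mem_coe.2 (Finset.mem_image.2 ⟨a, Finset.mem_attach _ _, rfl⟩))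
  · refine ⟨?_⟩
    rintro x y (h | h)
    · exact Or.inr h
    · exact Or.inl h
  · rintro v hv
    rcases hv with hvA | hvF
    · refine ⟨f ⟨v, hvA⟩, Or.inl ⟨⟨v, hvA⟩, rfl, rfl⟩, ?_⟩
      rintro y (⟨a, ha1, ha2⟩ | ⟨a, ha1, ha2⟩)
      · rw [← ha2]; exact congrArg f (Subtype.ext ha1)
      · exact absurd hvA (ha2 ▸ hfnA a)
    · obtain ⟨a, _, rfl⟩ := Finset.mem_image.1 (Finset.mem_coe.1 hvF)
      refine ⟨↑a, Or.inr ⟨a, rfl, rfl⟩, ?_⟩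
      rintro y (⟨a', ha1, ha2⟩ | ⟨a', ha1, ha2⟩)
      · exact absurd (ha1 ▸ a'.2) (hfnA a)
      · rw [← ha1]; exact congrArg Subtype.val (hfinj ha2)
  · exact fun x hx => Or.inl hx
  · intro x hx
    rcases hx with h | h
    · exact Or.inl h
    · exact Or.inr (Finset.mem_coe.2 (hFnB _ (Finset.mem_coe.1 h)))
  · have hdisj : Disjoint A Fn := Finset.disjoint_left.2
      (fun x hx hx' => absurd hx (Finset.disjoint_left.1 hAB.symm (hFnB x hx')))
    show (↑A ∪ ↑Fn : Set V).ncard = 2 * A.card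
    rw [← Finset.coe_union, Set.ncard_coe_finset, Finset.card_union_of_disjoint hdisj,
      Finset.card_image_of_injective _ hfinj, Finset.card_attach]
    ring

lemma exists_matching_of_almost_complete {V : Type*} [Fintype V] (H : SimpleGraph V)
    (A B : Set V) (hAB : Disjoint A B) (t : ℝ)
    (hA : A.ncard ≤ B.ncard) (h2t : 2 * t ≤ (B.ncard : ℝ))
    (hdA : ∀ a ∈ A, (({b ∈ B | ¬ H.Adj a b}).ncard : ℝ) ≤ t)
    (hdB : ∀ b ∈ B, (({a ∈ A | ¬ H.Adj b a}).ncard : ℝ) ≤ t) :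
    ∃ M : H.Subgraph, M.IsMatching ∧ A ⊆ M.verts ∧ M.verts ⊆ A ∪ B ∧
      M.verts.ncard = 2 * A.ncard := by
  classical
  set Af := A.toFinite.toFinset with hAf
  set Bf := B.toFinite.toFinset with hBf
  have hcoeA : (Af : Set V) = A := Set.Finite.coe_toFinset _
  have hcoeB : (Bf : Set V) = B := Set.Finite.coe_toFinset _
  have hcardA : Af.card = A.ncard := (Set.ncard_eq_toFinset_card A _).symm
  have hcardB : Bf.card = B.ncard := (Set.ncard_eq_toFinset_card B _).symm
  have hfilterB : ∀ a, ((Bf.filter fun b => ¬ H.Adj a b) : Set V) = {b ∈ B | ¬ H.Adj a b} := by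
    intro a; ext x; simp [Bf, Set.Finite.mem_toFinset]
  have hfilterA : ∀ b, ((Af.filter fun a => ¬ H.Adj b a) : Set V) = {a ∈ A | ¬ H.Adj b a} := by
    intro b; ext x; simp [Af, Set.Finite.mem_toFinset]
  obtain ⟨M, hM, h1, h2, h3⟩ := exists_matching_finset H Af Bf
    (Finset.disjoint_coe.1 (by rw [hcoeA, hcoeB]; exact hAB)) t
    (by rw [hcardA, hcardB]; exact hA) (by rw [hcardB]; exact h2t)
    (fun a ha => by
      rw [show ((Bf.filter fun b => ¬ H.Adj a b).card) = ({b ∈ B | ¬ H.Adj a b}).ncard by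
        rw [← hfilterB a, Set.ncard_coe_finset]]
      exact hdA a (hcoeA ▸ Finset.mem_coe.2 ha))
    (fun b hb => by
      rw [show ((Af.filter fun a => ¬ H.Adj b a).card) = ({a ∈ A | ¬ H.Adj b a}).ncard by
        rw [← hfilterA b, Set.ncard_coe_finset]]
      exact hdB b (hcoeB ▸ Finset.mem_coe.2 hb))
  exact ⟨M, hM, hcoeA ▸ h1, by rw [hcoeA, hcoeB] at h2; exact h2, by rw [h3, hcardA]⟩


lemma common_mem_set {V : Type*} (S : Set V) (hS : S.Finite) (P Q : V → Prop)
    (h : ({x ∈ S | ¬ P x}).ncard + ({x ∈ S | ¬ Q x}).ncard < S.ncard) :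
    ∃ x ∈ S, P x ∧ Q x := by
  classical
  by_contra hc
  push_neg at hc
  have hsub : S ⊆ {x ∈ S | ¬ P x} ∪ {x ∈ S | ¬ Q x} := by
    intro x hx
    rcases Classical.em (P x) with hP | hP
    · exact Or.inr ⟨hx, hc x hx hP⟩
    · exact Or.inl ⟨hx, hP⟩
  have hle := Set.ncard_le_ncard hsub ((hS.subset (Set.sep_subset _ _)).union
    (hS.subset (Set.sep_subset _ _)))
  have hun := Set.ncard_union_le {x ∈ S | ¬ P x} {x ∈ S | ¬ Q x}
  omega

set_option maxHeartbeats 2000000 in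
/-- Claim: let `F₁` (with vertex set `C`) be a largest monochromatic component, red,
containing no matching saturating at least `(2 + 0.1ξ)k'` vertices.  If
`|V_s \ C| ≥ (1/2)(1+4ξ)k'` and `|C ∩ V_s| ≥ (1+4ξ)k'` for each `s = 1, 2`, then the
blue subgraph contains a connected matching saturating at least `(2+8ξ)k'` vertices. -/
theorem blue_connected_matching_from_largest_red_component (ξ : ℝ) (hξ0 : 0 < ξ)
    (hξ1 : ξ ≤ 1 / 1000) :
    ∃ K₀ : ℝ, ∀ k' : ℝ, K₀ ≤ k' → ∀ N : ℕ, (N : ℝ) = (2 + 8 * ξ) * k' →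
      ∀ G : SimpleGraph (Fin N ⊕ Fin N), G ≤ completeBipartiteGraph (Fin N) (Fin N) →
      (∀ v, (7 / 8 + ξ) * ((2 + 8 * ξ) * k') ≤ ((G.neighborSet v).ncard : ℝ)) →
      ∀ χ : Sym2 (Fin N ⊕ Fin N) → Fin 2,
      ∀ c : (colorSubgraph G χ 0).ConnectedComponent,
        -- `F₁` has the largest number of vertices among all monochromatic components
        (∀ (i : Fin 2) (c' : (colorSubgraph G χ i).ConnectedComponent),
          c'.supp.ncard ≤ c.supp.ncard) →
        -- `F₁` contains no matching saturating at least `(2 + 0.1ξ)k'` vertices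
        (¬ ∃ M : (colorSubgraph G χ 0).Subgraph, M.IsMatching ∧ M.verts ⊆ c.supp ∧
          (2 + 0.1 * ξ) * k' ≤ (M.verts.ncard : ℝ)) →
        ((1 / 2) * (1 + 4 * ξ) * k' ≤ ((Set.range (Sum.inl : Fin N → Fin N ⊕ Fin N) \ c.supp).ncard : ℝ)) →
        ((1 / 2) * (1 + 4 * ξ) * k' ≤ ((Set.range (Sum.inr : Fin N → Fin N ⊕ Fin N) \ c.supp).ncard : ℝ)) →
        ((1 + 4 * ξ) * k' ≤ ((c.supp ∩ Set.range (Sum.inl : Fin N → Fin N ⊕ Fin N)).ncard : ℝ)) →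
        ((1 + 4 * ξ) * k' ≤ ((c.supp ∩ Set.range (Sum.inr : Fin N → Fin N ⊕ Fin N)).ncard : ℝ)) →
        HasConnMatching (colorSubgraph G χ 1) ((2 + 8 * ξ) * k') := by
  classical
  refine ⟨1, fun k' hk' N hN G hGle hδ χ c hmax hnomatch hD hE hC1 hC2 => ?_⟩
  have hk0 : (0:ℝ) < k' := lt_of_lt_of_le one_pos hk'
  set Bl := colorSubgraph G χ 1 with hBldef
  set V1 : Set (Fin N ⊕ Fin N) := Set.range Sum.inl with hV1def
  set V2 : Set (Fin N ⊕ Fin N) := Set.range Sum.inr with hV2def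
  set C : Set (Fin N ⊕ Fin N) := c.supp with hCdef
  set C1 : Set (Fin N ⊕ Fin N) := C ∩ V1 with hC1def
  set C2 : Set (Fin N ⊕ Fin N) := C ∩ V2 with hC2def
  set D : Set (Fin N ⊕ Fin N) := V1 \ C with hDdef
  set E : Set (Fin N ⊕ Fin N) := V2 \ C with hEdef
  -- side cardinalities
  have hV1N : V1.ncard = N := by
    rw [hV1def, ← Set.image_univ, Set.ncard_image_of_injective _ Sum.inl_injective,
      Set.ncard_univ, Nat.card_eq_fintype_card, Fintype.card_fin]
  have hV2N : V2.ncard = N := by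
    rw [hV2def, ← Set.image_univ, Set.ncard_image_of_injective _ Sum.inr_injective,
      Set.ncard_univ, Nat.card_eq_fintype_card, Fintype.card_fin]
  -- sides disjoint
  have hV12 : ∀ x, x ∈ V1 → x ∈ V2 → False := by
    rintro x ⟨a, rfl⟩ ⟨b, hb⟩
    exact Sum.inl_ne_inr hb.symm
  -- neighbors lie in the opposite side
  have hside1 : ∀ x ∈ V1, ∀ y, G.Adj x y → y ∈ V2 := by
    rintro x ⟨a, rfl⟩ y h
    have h' := hGle h
    simp only [completeBipartiteGraph_adj] at h'
    rcases h' with ⟨_, h2⟩ | ⟨h1, _⟩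
    · obtain ⟨b, rfl⟩ := Sum.isRight_iff.1 h2
      exact ⟨b, rfl⟩
    · simp at h1
  have hside2 : ∀ x ∈ V2, ∀ y, G.Adj x y → y ∈ V1 := by
    rintro x ⟨a, rfl⟩ y h
    have h' := hGle h
    simp only [completeBipartiteGraph_adj] at h'
    rcases h' with ⟨h1, _⟩ | ⟨_, h2⟩
    · simp at h1
    · obtain ⟨b, rfl⟩ := Sum.isLeft_iff.1 h2
      exact ⟨b, rfl⟩
  -- the main counting fact: few non-neighbors within a side
  have hbad : ∀ (x : Fin N ⊕ Fin N) (Wside : Set (Fin N ⊕ Fin N)),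
      (∀ y, G.Adj x y → y ∈ Wside) → Wside.ncard = N →
      ∀ (P : Fin N ⊕ Fin N → Fin N ⊕ Fin N → Prop) (S : Set (Fin N ⊕ Fin N)), S ⊆ Wside →
      (∀ y ∈ S, G.Adj x y → P x y) →
      (({y ∈ S | ¬ P x y}).ncard : ℝ) ≤ k'/4 := by
    intro x Wside hnbW hWN P S hSW hSP
    have hsub : {y ∈ S | ¬ P x y} ⊆ Wside \ G.neighborSet x := by
      rintro y ⟨hy1, hy2⟩
      exact ⟨hSW hy1, fun hadj => hy2 (hSP y hy1 hadj)⟩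
    have hnbsub : G.neighborSet x ⊆ Wside := fun y hy => hnbW y hy
    have h1 : ({y ∈ S | ¬ P x y}).ncard ≤ (Wside \ G.neighborSet x).ncard :=
      Set.ncard_le_ncard hsub (Set.toFinite _)
    have h2 : (Wside \ G.neighborSet x).ncard = Wside.ncard - (G.neighborSet x).ncard :=
      Set.ncard_diff hnbsub (Set.toFinite _)
    have h3 : (G.neighborSet x).ncard ≤ Wside.ncard :=
      Set.ncard_le_ncard hnbsub (Set.toFinite _)
    have h4 := hδ x
    have h5 : (({y ∈ S | ¬ P x y}).ncard : ℝ) ≤ (N:ℝ) - ((G.neighborSet x).ncard : ℝ) := by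
      rw [hWN] at h2 h3
      have : ((N - (G.neighborSet x).ncard : ℕ) : ℝ)
          = (N:ℝ) - ((G.neighborSet x).ncard : ℝ) := Nat.cast_sub h3
      rw [← this, ← h2]
      exact_mod_cast h1
    rw [hN] at h5
    nlinarith [mul_nonneg hξ0.le hk0.le, mul_nonneg (mul_nonneg hξ0.le hξ0.le) hk0.le]
  -- color dichotomy
  have hcol : ∀ u v, G.Adj u v → (colorSubgraph G χ 0).Adj u v ∨ Bl.Adj u v := by
    intro u v h
    have hd : ∀ i : Fin 2, i = 0 ∨ i = 1 := by decide
    rcases hd (χ s(u, v)) with h0 | h1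
    · exact Or.inl (show G.Adj u v ∧ _ from ⟨h, h0⟩)
    · exact Or.inr (show G.Adj u v ∧ _ from ⟨h, h1⟩)
  -- red edges stay in C
  have hclose : ∀ u v, u ∈ C → (colorSubgraph G χ 0).Adj u v → v ∈ C := by
    intro u v hu hadj
    rw [hCdef, SimpleGraph.ConnectedComponent.mem_supp_iff] at hu ⊢
    rw [← hu]
    exact SimpleGraph.ConnectedComponent.sound hadj.symm.reachable
  have hblueXC : ∀ u v, u ∉ C → v ∈ C → G.Adj u v → Bl.Adj u v := by
    intro u v hu hv h
    rcases hcol u v h with hr | hb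
    · exact absurd (hclose v u hv hr.symm) hu
    · exact hb
  -- degree conditions for the blue graph
  have hdDC2 : ∀ a ∈ D, (({b ∈ C2 | ¬ Bl.Adj a b}).ncard : ℝ) ≤ k'/4 := by
    intro a ha
    exact hbad a V2 (hside1 a ha.1) hV2N _ C2 Set.inter_subset_right
      (fun y hy hadj => hblueXC a y ha.2 hy.1 hadj)
  have hdC2D : ∀ b ∈ C2, (({a ∈ D | ¬ Bl.Adj b a}).ncard : ℝ) ≤ k'/4 := by
    intro b hb
    exact hbad b V1 (hside2 b hb.2) hV1N _ D Set.diff_subset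
      (fun y hy hadj => (hblueXC y b hy.2 hb.1 hadj.symm).symm)
  have hdEC1 : ∀ a ∈ E, (({b ∈ C1 | ¬ Bl.Adj a b}).ncard : ℝ) ≤ k'/4 := by
    intro a ha
    exact hbad a V1 (hside2 a ha.1) hV1N _ C1 Set.inter_subset_right
      (fun y hy hadj => hblueXC a y ha.2 hy.1 hadj)
  have hdC1E : ∀ b ∈ C1, (({a ∈ E | ¬ Bl.Adj b a}).ncard : ℝ) ≤ k'/4 := by
    intro b hb
    exact hbad b V2 (hside1 b hb.2) hV2N _ E Set.diff_subset
      (fun y hy hadj => (hblueXC y b hy.2 hb.1 hadj.symm).symm)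
  -- handy size bounds as reals
  have hq1 : 2 * (k'/4) ≤ ((C1.ncard : ℝ)) := by nlinarith [hC1, hξ0.le, hk0.le]
  have hq2 : 2 * (k'/4) ≤ ((C2.ncard : ℝ)) := by nlinarith [hC2, hξ0.le, hk0.le]
  have hqD : 2 * (k'/4) ≤ ((D.ncard : ℝ)) := by nlinarith [hD, hξ0.le, hk0.le]
  have hqE : 2 * (k'/4) ≤ ((E.ncard : ℝ)) := by nlinarith [hE, hξ0.le, hk0.le]
  -- main case split: is there a blue edge between C1 and C2?
  by_cases hble : ∃ u ∈ C1, ∃ v ∈ C2, Bl.Adj u v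
  · -- build the big blue connected matching
    obtain ⟨u₀, hu₀, v₀, hv₀, hb₀⟩ := hble
    have hdisjDC2 : Disjoint D C2 :=
      Set.disjoint_left.2 fun x hx hx' => hV12 x hx.1 hx'.2
    have hdisjEC1 : Disjoint E C1 :=
      Set.disjoint_left.2 fun x hx hx' => hV12 x hx'.2 hx.1
    have hMA : ∃ MA : Bl.Subgraph, MA.IsMatching ∧ MA.verts ⊆ D ∪ C2 ∧
        (1 + 4*ξ) * k' ≤ (MA.verts.ncard : ℝ) := by
      rcases le_total D.ncard C2.ncard with hle | hle
      · obtain ⟨M, h1, _, h3, h4⟩ := exists_matching_of_almost_complete Bl D C2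
          hdisjDC2 (k'/4) hle hq2 hdDC2 hdC2D
        refine ⟨M, h1, h3, ?_⟩
        rw [h4]
        push_cast
        linarith [hD]
      · obtain ⟨M, h1, _, h3, h4⟩ := exists_matching_of_almost_complete Bl C2 D
          hdisjDC2.symm (k'/4) hle hqD hdC2D hdDC2
        refine ⟨M, h1, by rw [Set.union_comm]; exact h3, ?_⟩
        rw [h4]
        push_cast
        linarith [hC2]
    have hMB : ∃ MB : Bl.Subgraph, MB.IsMatching ∧ MB.verts ⊆ E ∪ C1 ∧
        (1 + 4*ξ) * k' ≤ (MB.verts.ncard : ℝ) := by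
      rcases le_total E.ncard C1.ncard with hle | hle
      · obtain ⟨M, h1, _, h3, h4⟩ := exists_matching_of_almost_complete Bl E C1
          hdisjEC1 (k'/4) hle hq1 hdEC1 hdC1E
        refine ⟨M, h1, h3, ?_⟩
        rw [h4]
        push_cast
        linarith [hE]
      · obtain ⟨M, h1, _, h3, h4⟩ := exists_matching_of_almost_complete Bl C1 E
          hdisjEC1.symm (k'/4) hle hqE hdC1E hdEC1
        refine ⟨M, h1, by rw [Set.union_comm]; exact h3, ?_⟩
        rw [h4]
        push_cast
        linarith [hC1]
    obtain ⟨MA, hMAm, hMAsub, hMAcard⟩ := hMA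
    obtain ⟨MB, hMBm, hMBsub, hMBcard⟩ := hMB
    have hvdisj : Disjoint MA.verts MB.verts := by
      rw [Set.disjoint_left]
      intro x hxA hxB
      rcases hMAsub hxA with hx1 | hx1 <;> rcases hMBsub hxB with hx2 | hx2
      · exact hV12 x hx1.1 hx2.1
      · exact hx1.2 hx2.1
      · exact hx2.2 hx1.1
      · exact hV12 x hx2.2 hx1.2
    have hsupdisj : Disjoint MA.support MB.support := by
      rw [hMAm.support_eq_verts, hMBm.support_eq_verts]
      exact hvdisj
    refine ⟨MA ⊔ MB, hMAm.sup hMBm hsupdisj, ?_, ?_⟩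
    · -- connectivity
      -- common neighbor tools
      have hcommon : ∀ x ∈ C2, ∀ y ∈ C2, ∃ d ∈ D, Bl.Adj x d ∧ Bl.Adj y d := by
        intro x hx y hy
        refine common_mem_set D (Set.toFinite _) (Bl.Adj x) (Bl.Adj y) ?_
        have b1 := hdC2D x hx
        have b2 := hdC2D y hy
        have : (({a ∈ D | ¬ Bl.Adj x a}).ncard : ℝ) + (({a ∈ D | ¬ Bl.Adj y a}).ncard : ℝ)
            < (D.ncard : ℝ) := by nlinarith [hD, hξ0, hk0]
        exact_mod_cast this
      have hcommon' : ∀ x ∈ C1, ∀ y ∈ C1, ∃ e ∈ E, Bl.Adj x e ∧ Bl.Adj y e := by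
        intro x hx y hy
        refine common_mem_set E (Set.toFinite _) (Bl.Adj x) (Bl.Adj y) ?_
        have b1 := hdC1E x hx
        have b2 := hdC1E y hy
        have : (({a ∈ E | ¬ Bl.Adj x a}).ncard : ℝ) + (({a ∈ E | ¬ Bl.Adj y a}).ncard : ℝ)
            < (E.ncard : ℝ) := by nlinarith [hE, hξ0, hk0]
        exact_mod_cast this
      have hnbC2 : ∀ x ∈ D, ∃ y ∈ C2, Bl.Adj x y := by
        intro x hx
        have b1 := hdDC2 x hx
        have : (({b ∈ C2 | ¬ Bl.Adj x b}).ncard : ℝ) + (({b ∈ C2 | ¬ Bl.Adj x b}).ncard : ℝ)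
            < (C2.ncard : ℝ) := by nlinarith [hC2, hξ0, hk0]
        obtain ⟨y, hy, hy1, _⟩ := common_mem_set C2 (Set.toFinite _) (Bl.Adj x) (Bl.Adj x)
          (by exact_mod_cast this)
        exact ⟨y, hy, hy1⟩
      have hnbC1 : ∀ x ∈ E, ∃ y ∈ C1, Bl.Adj x y := by
        intro x hx
        have b1 := hdEC1 x hx
        have : (({b ∈ C1 | ¬ Bl.Adj x b}).ncard : ℝ) + (({b ∈ C1 | ¬ Bl.Adj x b}).ncard : ℝ)
            < (C1.ncard : ℝ) := by nlinarith [hC1, hξ0, hk0]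
        obtain ⟨y, hy, hy1, _⟩ := common_mem_set C1 (Set.toFinite _) (Bl.Adj x) (Bl.Adj x)
          (by exact_mod_cast this)
        exact ⟨y, hy, hy1⟩
      have hreachC2 : ∀ x ∈ C2, Bl.Reachable x v₀ := by
        intro x hx
        obtain ⟨d, _, h1, h2⟩ := hcommon x hx v₀ hv₀
        exact h1.reachable.trans h2.symm.reachable
      have hreachC1 : ∀ x ∈ C1, Bl.Reachable x u₀ := by
        intro x hx
        obtain ⟨e, _, h1, h2⟩ := hcommon' x hx u₀ hu₀
        exact h1.reachable.trans h2.symm.reachable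
      have hvu : Bl.Reachable v₀ u₀ := hb₀.symm.reachable
      have hreach : ∀ x, Bl.Reachable x u₀ := by
        intro x
        cases x with
        | inl a =>
          by_cases hxc : Sum.inl a ∈ C
          · exact hreachC1 _ ⟨hxc, ⟨a, rfl⟩⟩
          · obtain ⟨y, hy, hadj⟩ := hnbC2 _ ⟨⟨a, rfl⟩, hxc⟩
            exact (hadj.reachable.trans (hreachC2 y hy)).trans hvu
        | inr b =>
          by_cases hxc : Sum.inr b ∈ C
          · exact (hreachC2 _ ⟨hxc, ⟨b, rfl⟩⟩).trans hvu
          · obtain ⟨y, hy, hadj⟩ := hnbC1 _ ⟨⟨b, rfl⟩, hxc⟩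
            exact hadj.reachable.trans (hreachC1 y hy)
      intro u _ v _
      exact (hreach u).trans (hreach v).symm
    · -- size
      have hverts : (MA ⊔ MB).verts = MA.verts ∪ MB.verts := rfl
      rw [hverts, Set.ncard_union_eq hvdisj (Set.toFinite _) (Set.toFinite _)]
      push_cast
      linarith
  · -- no blue C1-C2 edge: contradiction with the absence of a large red matching
    exfalso
    push_neg at hble
    have hred : ∀ u ∈ C1, ∀ v ∈ C2, G.Adj u v → (colorSubgraph G χ 0).Adj u v := by
      intro u hu v hv h
      rcases hcol u v h with hr | hb
      · exact hr
      · exact absurd hb (hble u hu v hv)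
    have hdC1C2 : ∀ a ∈ C1, (({b ∈ C2 | ¬ (colorSubgraph G χ 0).Adj a b}).ncard : ℝ) ≤ k'/4 := by
      intro a ha
      exact hbad a V2 (hside1 a ha.2) hV2N _ C2 Set.inter_subset_right
        (fun y hy hadj => hred a ha y hy hadj)
    have hdC2C1 : ∀ b ∈ C2, (({a ∈ C1 | ¬ (colorSubgraph G χ 0).Adj b a}).ncard : ℝ) ≤ k'/4 := by
      intro b hb
      exact hbad b V1 (hside2 b hb.2) hV1N _ C1 Set.inter_subset_right
        (fun y hy hadj => (hred y hy b hb hadj.symm).symm)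
    have hdisj12 : Disjoint C1 C2 :=
      Set.disjoint_left.2 fun x hx hx' => hV12 x hx.2 hx'.2
    apply hnomatch
    rcases le_total C1.ncard C2.ncard with hle | hle
    · obtain ⟨M, h1, _, h3, h4⟩ := exists_matching_of_almost_complete (colorSubgraph G χ 0) C1 C2
        hdisj12 (k'/4) hle hq2 hdC1C2 hdC2C1
      refine ⟨M, h1, fun x hx => ?_, ?_⟩
      · rcases h3 hx with h | h
        · exact h.1
        · exact h.1
      · rw [h4]
        push_cast
        nlinarith [hC1, hξ0.le, hk0.le]
    · obtain ⟨M, h1, _, h3, h4⟩ := exists_matching_of_almost_complete (colorSubgraph G χ 0) C2 C1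
        hdisj12.symm (k'/4) hle hq1 hdC2C1 hdC1C2
      refine ⟨M, h1, fun x hx => ?_, ?_⟩
      · rcases h3 hx with h | h
        · exact h.1
        · exact h.1
      · rw [h4]
        push_cast
        nlinarith [hC2, hξ0.le, hk0.le]
end

section
/- Let 0 < ξ ≤ 10⁻³ and let G be a bipartite graph with bipartition {V₁, V₂}, |V₁| = |V₂| = (2 + 8ξ)k′ (with k′ sufficiently large) and minimum degree δ(G) ≥ (7/8 + ξ)(2 + 8ξ)k′, whose edges are 2-colored red and blue. Let C be the vertex set of a connected component of the spanning subgraph of red edges, and let {T, U, S} be a partition of C such that every vertex of T has fewer than ξ²k′ red neighbors in T and no red neighbors in U. If for some s ∈ {1, 2} both |(T ∪ U) ∩ V_s| ≥ (1 + 4ξ)k′ and |V_{3−s} \ (U ∪ S)| ≥ (1 + 4ξ)k′, then the bipartite graph of blue edges of G between (T ∪ U) ∩ V_s and V_{3−s} \ (U ∪ S) contains a connected matching saturating at least (2 + 8ξ)k′ vertices. -/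
/-- The bipartite graph of edges of `H` with one endpoint in `A` and the other in `B`. -/
def betweenGraph {V : Type*} (H : SimpleGraph V) (A B : Set V) : SimpleGraph V where
  Adj u v := H.Adj u v ∧ ((u ∈ A ∧ v ∈ B) ∨ (u ∈ B ∧ v ∈ A))
  symm := ⟨fun u v h => ⟨h.1.symm, by tauto⟩⟩
  loopless := ⟨fun u h => H.loopless.irrefl u h.1⟩

open Classical in
theorem auxConnMatching {V : Type*} [Fintype V] (H : SimpleGraph V)
    (A B : Set V) (hdisj : Disjoint A B)
    (hA : ∀ v ∈ A, H.neighborSet v ⊆ B) (hB : ∀ w ∈ B, H.neighborSet w ⊆ A)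
    (γ : ℝ)
    (hdegA : ∀ v ∈ A, (B.ncard : ℝ) - γ ≤ ((H.neighborSet v).ncard : ℝ))
    (hdegB : ∀ w ∈ B, (A.ncard : ℝ) - γ ≤ ((H.neighborSet w).ncard : ℝ))
    (hca : 2*γ < (A.ncard : ℝ)) (hcb : 2*γ < (B.ncard : ℝ))
    (t : ℕ) (hta : t ≤ A.ncard) (htb : t ≤ B.ncard) :
    ∃ M : H.Subgraph, M.IsMatching ∧ (∀ u ∈ M.verts, ∀ v ∈ M.verts, H.Reachable u v) ∧
      M.verts.ncard = 2*t := by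
  classical
  -- reachability facts
  have hγnn : (0:ℝ) ≤ γ + γ → True := fun _ => trivial
  have commonA : ∀ x ∈ A, ∀ y ∈ A, ∃ w, H.Adj x w ∧ H.Adj y w := by
    intro x hx y hy
    by_contra hcon
    push_neg at hcon
    have hdis : Disjoint (H.neighborSet x) (H.neighborSet y) := by
      rw [Set.disjoint_left]
      intro w hw hw'
      exact hcon w hw hw'
    have hsub : H.neighborSet x ∪ H.neighborSet y ⊆ B :=
      Set.union_subset (hA x hx) (hA y hy)
    have hcard : (H.neighborSet x ∪ H.neighborSet y).ncard
        = (H.neighborSet x).ncard + (H.neighborSet y).ncard :=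
      Set.ncard_union_eq hdis (Set.toFinite _) (Set.toFinite _)
    have hle : ((H.neighborSet x ∪ H.neighborSet y).ncard : ℝ) ≤ (B.ncard : ℝ) := by
      exact_mod_cast Nat.cast_le.mpr (Set.ncard_le_ncard hsub (Set.toFinite _))
    rw [hcard] at hle
    push_cast at hle
    have h1 := hdegA x hx
    have h2 := hdegA y hy
    linarith
  have nbrB : ∀ w ∈ B, ∃ z, H.Adj w z ∧ z ∈ A := by
    intro w hw
    have h := hdegB w hw
    have : (0:ℝ) < ((H.neighborSet w).ncard : ℝ) := by linarith
    have hne : (H.neighborSet w).Nonempty := by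
      rw [← Set.ncard_pos (Set.toFinite _)]
      exact_mod_cast this
    obtain ⟨z, hz⟩ := hne
    exact ⟨z, hz, hB w hw hz⟩
  have reachAB : ∀ u ∈ A ∪ B, ∀ v ∈ A ∪ B, H.Reachable u v := by
    have rAA : ∀ x ∈ A, ∀ y ∈ A, H.Reachable x y := by
      intro x hx y hy
      obtain ⟨w, h1, h2⟩ := commonA x hx y hy
      exact h1.reachable.trans h2.reachable.symm
    have rAB : ∀ x ∈ A, ∀ y ∈ B, H.Reachable x y := by
      intro x hx y hy
      obtain ⟨z, h1, h2⟩ := nbrB y hy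
      exact (rAA x hx z h2).trans h1.reachable.symm
    intro u hu v hv
    rcases hu with hu | hu <;> rcases hv with hv | hv
    · exact rAA u hu v hv
    · exact rAB u hu v hv
    · exact (rAB v hv u hu).symm
    · obtain ⟨z, h1, h2⟩ := nbrB u hu
      exact h1.reachable.trans (rAB z h2 v hv)
  -- Hall
  obtain ⟨A₀, hA₀sub, hA₀card⟩ := Finset.exists_subset_card_eq (s := (Set.toFinite A).toFinset) (n := t)
    (by rwa [← Set.ncard_eq_toFinset_card A (Set.toFinite A)])
  have hA₀A : ∀ x ∈ A₀, x ∈ A := fun x hx => (Set.Finite.mem_toFinset _).mp (hA₀sub hx)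
  set nbr : {x // x ∈ A₀} → Finset V :=
    fun i => (Set.toFinite (H.neighborSet (i : V))).toFinset with hnbr
  have hall : ∀ s : Finset {x // x ∈ A₀}, s.card ≤ (s.biUnion nbr).card := by
    intro s
    rcases s.eq_empty_or_nonempty with rfl | ⟨i₀, hi₀⟩
    · simp
    by_cases hcase : (s.card : ℝ) ≤ (B.ncard : ℝ) - γ
    · have hsub : nbr i₀ ⊆ s.biUnion nbr := Finset.subset_biUnion_of_mem nbr hi₀
      have h1 : (B.ncard : ℝ) - γ ≤ ((nbr i₀).card : ℝ) := by
        rw [hnbr]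
        rw [← Set.ncard_eq_toFinset_card _ (Set.toFinite _)]
        exact hdegA _ (hA₀A _ i₀.2)
      have := Finset.card_le_card hsub
      have : ((nbr i₀).card : ℝ) ≤ ((s.biUnion nbr).card : ℝ) := by exact_mod_cast this
      exact_mod_cast le_trans hcase (le_trans h1 this)
    · push_neg at hcase
      -- every w ∈ B is in the biUnion
      have hBsub : (Set.toFinite B).toFinset ⊆ s.biUnion nbr := by
        intro w hw
        have hwB : w ∈ B := (Set.Finite.mem_toFinset _).mp hw
        by_contra hnot
        have hforall : ∀ i ∈ s, ¬ H.Adj (i : V) w := by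
          intro i hi hadj
          exact hnot (Finset.mem_biUnion.mpr ⟨i, hi, (Set.Finite.mem_toFinset _).mpr hadj⟩)
        -- image of s in V avoids neighbors of w
        have himg : (s.image Subtype.val) ⊆ (Set.toFinite (A \ H.neighborSet w)).toFinset := by
          intro x hx
          obtain ⟨i, hi, rfl⟩ := Finset.mem_image.mp hx
          rw [Set.Finite.mem_toFinset]
          exact ⟨hA₀A _ i.2, fun hmem => hforall i hi hmem.symm⟩
        have hcards : s.card ≤ (A \ H.neighborSet w).ncard := by
          rw [Set.ncard_eq_toFinset_card _ (Set.toFinite _)]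
          calc s.card = (s.image Subtype.val).card :=
                (Finset.card_image_of_injective s Subtype.val_injective).symm
            _ ≤ _ := Finset.card_le_card himg
        have hdiff : ((A \ H.neighborSet w).ncard : ℝ) = (A.ncard : ℝ) - ((H.neighborSet w).ncard : ℝ) := by
          rw [Set.cast_ncard_sdiff (hB w hwB) (Set.toFinite _)]
        have h2 := hdegB w hwB
        have : (s.card : ℝ) ≤ γ := by
          have := (Nat.cast_le (α := ℝ)).mpr hcards
          rw [hdiff] at this
          linarith
        linarith
      have : B.ncard ≤ (s.biUnion nbr).card := by
        rw [Set.ncard_eq_toFinset_card _ (Set.toFinite _)]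
        exact Finset.card_le_card hBsub
      have hst : s.card ≤ t := by
        calc s.card ≤ A₀.card := by
              have := Finset.card_le_card (Finset.subset_univ s)
              simpa [Fintype.card_coe] using this
          _ = t := hA₀card
      omega
  obtain ⟨f, hfinj, hfmem⟩ := (Finset.all_card_le_biUnion_card_iff_exists_injective nbr).mp hall
  have hfadj : ∀ i : {x // x ∈ A₀}, H.Adj (i : V) (f i) := by
    intro i
    have := hfmem i
    rw [hnbr, Set.Finite.mem_toFinset] at this
    exact this
  have hfB : ∀ i : {x // x ∈ A₀}, f i ∈ B := fun i => hA _ (hA₀A _ i.2) (hfadj i)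
  -- build the matching
  refine ⟨⟨(↑A₀ : Set V) ∪ Set.range f,
    fun u v => ∃ i : {x // x ∈ A₀}, ((u = ↑i ∧ v = f i) ∨ (u = f i ∧ v = ↑i)),
    ?_, ?_, ?_⟩, ?_, ?_, ?_⟩
  · rintro u v ⟨i, ⟨rfl, rfl⟩ | ⟨rfl, rfl⟩⟩
    · exact hfadj i
    · exact (hfadj i).symm
  · rintro u v ⟨i, ⟨rfl, rfl⟩ | ⟨rfl, rfl⟩⟩
    · exact Or.inl i.2
    · exact Or.inr ⟨i, rfl⟩
  · refine ⟨?_⟩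
    rintro u v ⟨i, ⟨rfl, rfl⟩ | ⟨rfl, rfl⟩⟩
    · exact ⟨i, Or.inr ⟨rfl, rfl⟩⟩
    · exact ⟨i, Or.inl ⟨rfl, rfl⟩⟩
  · -- IsMatching
    rintro v (hv | ⟨i, rfl⟩)
    · refine ⟨f ⟨v, hv⟩, ⟨⟨v, hv⟩, Or.inl ⟨rfl, rfl⟩⟩, ?_⟩
      rintro w ⟨j, ⟨hj1, rfl⟩ | ⟨hj1, rfl⟩⟩
      · have : (⟨v, hv⟩ : {x // x ∈ A₀}) = j := Subtype.ext hj1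
        rw [this]
      · exfalso
        exact Set.disjoint_left.mp hdisj (hA₀A v hv) (hj1 ▸ hfB j)
    · refine ⟨↑i, ⟨i, Or.inr ⟨rfl, rfl⟩⟩, ?_⟩
      rintro w ⟨j, ⟨hj1, rfl⟩ | ⟨hj1, rfl⟩⟩
      · exfalso
        exact Set.disjoint_left.mp hdisj (hA₀A _ (by rw [hj1]; exact j.2)) (hfB i)
      · rw [hfinj hj1]
  · -- reachability
    intro u hu v hv
    have hmem : ∀ x, x ∈ ((↑A₀ : Set V) ∪ Set.range f) → x ∈ A ∪ B := by
      rintro x (hx | ⟨i, rfl⟩)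
      · exact Or.inl (hA₀A x hx)
      · exact Or.inr (hfB i)
    exact reachAB u (hmem u hu) v (hmem v hv)
  · -- cardinality
    have hdisj2 : Disjoint (↑A₀ : Set V) (Set.range f) := by
      rw [Set.disjoint_left]
      rintro x hx ⟨i, rfl⟩
      exact Set.disjoint_left.mp hdisj (hA₀A _ hx) (hfB i)
    rw [Set.ncard_union_eq hdisj2 (Set.toFinite _) (Set.toFinite _)]
    have h1 : (↑A₀ : Set V).ncard = t := by
      rw [Set.ncard_coe_finset]; exact hA₀card
    have h2 : (Set.range f).ncard = t := by
      rw [← Set.image_univ, Set.ncard_image_of_injective _ hfinj, Set.ncard_univ,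
        Nat.card_eq_fintype_card, Fintype.card_coe, hA₀card]
    omega

theorem countHelper {V : Type*} [Fintype V] (G H : SimpleGraph V) (R : SimpleGraph V)
    (v : V) (B W : Set V) (hBW : B ⊆ W)
    (hnbrW : G.neighborSet v ⊆ W) (n d ρ : ℝ) (hWcard : (W.ncard : ℝ) = n)
    (hH : ∀ w ∈ B, G.Adj v w → ¬ R.Adj v w → H.Adj v w)
    (hred : ((R.neighborSet v ∩ B).ncard : ℝ) ≤ ρ)
    (hdeg : d ≤ ((G.neighborSet v).ncard : ℝ)) :
    (B.ncard : ℝ) - (n - d) - ρ ≤ ((H.neighborSet v).ncard : ℝ) := by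
  classical
  set X : Set V := G.neighborSet v ∩ B with hX
  have hXcard : (B.ncard : ℝ) - (n - d) ≤ (X.ncard : ℝ) := by
    have hsplit : (B ∩ G.neighborSet v).ncard + (B \ G.neighborSet v).ncard = B.ncard :=
      Set.ncard_inter_add_ncard_diff_eq_ncard B (G.neighborSet v) (Set.toFinite _)
    have hsub : B \ G.neighborSet v ⊆ W \ G.neighborSet v := fun x hx => ⟨hBW hx.1, hx.2⟩
    have h1 : ((B \ G.neighborSet v).ncard : ℝ) ≤ ((W \ G.neighborSet v).ncard : ℝ) := by
      exact_mod_cast Set.ncard_le_ncard hsub (Set.toFinite _)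
    have h2 : ((W \ G.neighborSet v).ncard : ℝ)
        = (W.ncard : ℝ) - ((G.neighborSet v).ncard : ℝ) :=
      Set.cast_ncard_sdiff hnbrW (Set.toFinite _)
    have h3 : X.ncard = (B ∩ G.neighborSet v).ncard := by
      rw [hX, Set.inter_comm]
    have h4 : ((B ∩ G.neighborSet v).ncard : ℝ) + ((B \ G.neighborSet v).ncard : ℝ)
        = (B.ncard : ℝ) := by exact_mod_cast hsplit
    rw [h3]
    rw [hWcard] at h2
    linarith
  have hYsub : X \ R.neighborSet v ⊆ H.neighborSet v := by
    rintro w ⟨⟨hw1, hw2⟩, hw3⟩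
    exact hH w hw2 hw1 hw3
  have hsplit2 : (X ∩ R.neighborSet v).ncard + (X \ R.neighborSet v).ncard = X.ncard :=
    Set.ncard_inter_add_ncard_diff_eq_ncard X (R.neighborSet v) (Set.toFinite _)
  have h5 : ((X \ R.neighborSet v).ncard : ℝ) ≤ ((H.neighborSet v).ncard : ℝ) := by
    exact_mod_cast Set.ncard_le_ncard hYsub (Set.toFinite _)
  have h6 : (X ∩ R.neighborSet v) ⊆ R.neighborSet v ∩ B := by
    rintro w ⟨⟨hw1, hw2⟩, hw3⟩
    exact ⟨hw3, hw2⟩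
  have h7 : ((X ∩ R.neighborSet v).ncard : ℝ) ≤ ρ := by
    have := Set.ncard_le_ncard h6 (Set.toFinite _)
    have : ((X ∩ R.neighborSet v).ncard : ℝ) ≤ ((R.neighborSet v ∩ B).ncard : ℝ) := by
      exact_mod_cast this
    linarith
  have h8 : ((X ∩ R.neighborSet v).ncard : ℝ) + ((X \ R.neighborSet v).ncard : ℝ)
      = (X.ncard : ℝ) := by exact_mod_cast hsplit2
  linarith

set_option maxHeartbeats 1600000 in
/-- Claim: with `C` the vertex set of a red component and `{T, U, S}` a partition of `C`
where every vertex of `T` has fewer than `ξ²k'` red neighbors in `T` and no red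
neighbors in `U`: if `|(T ∪ U) ∩ V_s| ≥ (1+4ξ)k'` and `|V_{3−s} \ (U ∪ S)| ≥ (1+4ξ)k'`,
then the blue bipartite graph between `(T ∪ U) ∩ V_s` and `V_{3−s} \ (U ∪ S)` contains
a connected matching saturating at least `(2+8ξ)k'` vertices. -/
theorem blue_connected_matching_from_tutte_partition (ξ : ℝ) (hξ0 : 0 < ξ)
    (hξ1 : ξ ≤ 1 / 1000) :
    ∃ K₀ : ℝ, ∀ k' : ℝ, K₀ ≤ k' → ∀ N : ℕ, (N : ℝ) = (2 + 8 * ξ) * k' →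
      ∀ G : SimpleGraph (Fin N ⊕ Fin N), G ≤ completeBipartiteGraph (Fin N) (Fin N) →
      (∀ v, (7 / 8 + ξ) * ((2 + 8 * ξ) * k') ≤ ((G.neighborSet v).ncard : ℝ)) →
      ∀ χ : Sym2 (Fin N ⊕ Fin N) → Fin 2,
      ∀ c : (colorSubgraph G χ 0).ConnectedComponent,
      ∀ T U S : Set (Fin N ⊕ Fin N),
        T ∪ U ∪ S = c.supp → Disjoint T U → Disjoint T S → Disjoint U S →
        (∀ v ∈ T, ((((colorSubgraph G χ 0).neighborSet v) ∩ T).ncard : ℝ) < ξ ^ 2 * k') →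
        (∀ v ∈ T, ((colorSubgraph G χ 0).neighborSet v) ∩ U = ∅) →
        ∀ Vs Vt : Set (Fin N ⊕ Fin N),
          ((Vs = Set.range Sum.inl ∧ Vt = Set.range Sum.inr) ∨
            (Vs = Set.range Sum.inr ∧ Vt = Set.range Sum.inl)) →
          (1 + 4 * ξ) * k' ≤ (((T ∪ U) ∩ Vs).ncard : ℝ) →
          (1 + 4 * ξ) * k' ≤ ((Vt \ (U ∪ S)).ncard : ℝ) →
          HasConnMatching
            (betweenGraph (colorSubgraph G χ 1) ((T ∪ U) ∩ Vs) (Vt \ (U ∪ S)))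
            ((2 + 8 * ξ) * k') := by
  classical
  refine ⟨1, ?_⟩
  intro k' hk N hN G hGbip hGdeg χ c T U S hTUS hTU hTS hUS hTfew hTnoU Vs Vt hV ha hb
  set A := (T ∪ U) ∩ Vs with hAdef
  set B := Vt \ (U ∪ S) with hBdef
  set H := betweenGraph (colorSubgraph G χ 1) A B with hHdef
  have hk0 : (0:ℝ) < k' := lt_of_lt_of_le one_pos hk
  have hNpos : (0:ℝ) < (N:ℝ) := by
    have h := mul_le_mul_of_nonneg_left hk (by linarith : (0:ℝ) ≤ 2 + 8 * ξ)
    rw [mul_one] at h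
    linarith
  have h2k : 2 * k' ≤ (N:ℝ) := by
    have := mul_pos hξ0 hk0
    linarith
  -- bipartition facts
  have hrange_inl : ((Set.range (Sum.inl : Fin N → Fin N ⊕ Fin N)).ncard : ℝ) = N := by
    rw [← Set.image_univ, Set.ncard_image_of_injective _ Sum.inl_injective, Set.ncard_univ,
      Nat.card_eq_fintype_card, Fintype.card_fin]
  have hrange_inr : ((Set.range (Sum.inr : Fin N → Fin N ⊕ Fin N)).ncard : ℝ) = N := by
    rw [← Set.image_univ, Set.ncard_image_of_injective _ Sum.inr_injective, Set.ncard_univ,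
      Nat.card_eq_fintype_card, Fintype.card_fin]
  have hnbr_inl : ∀ (a : Fin N) w, G.Adj (Sum.inl a) w →
      w ∈ Set.range (Sum.inr : Fin N → Fin N ⊕ Fin N) := by
    intro a w hadj
    have h := hGbip hadj
    rcases w with b | b
    · simp [completeBipartiteGraph] at h
    · exact ⟨b, rfl⟩
  have hnbr_inr : ∀ (a : Fin N) w, G.Adj (Sum.inr a) w →
      w ∈ Set.range (Sum.inl : Fin N → Fin N ⊕ Fin N) := by
    intro a w hadj
    have h := hGbip hadj
    rcases w with b | b
    · exact ⟨b, rfl⟩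
    · simp [completeBipartiteGraph] at h
  have hVfacts : Disjoint Vs Vt ∧ (Vs.ncard : ℝ) = N ∧ (Vt.ncard : ℝ) = N ∧
      (∀ v ∈ Vs, G.neighborSet v ⊆ Vt) ∧ (∀ v ∈ Vt, G.neighborSet v ⊆ Vs) := by
    have hdisj : Disjoint (Set.range (Sum.inl : Fin N → Fin N ⊕ Fin N)) (Set.range Sum.inr) := by
      rw [Set.disjoint_left]
      rintro x ⟨a, rfl⟩ ⟨b, hb⟩
      simp at hb
    rcases hV with ⟨rfl, rfl⟩ | ⟨rfl, rfl⟩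
    · exact ⟨hdisj, hrange_inl, hrange_inr,
        by rintro v ⟨a, rfl⟩ w hw; exact hnbr_inl a w hw,
        by rintro v ⟨a, rfl⟩ w hw; exact hnbr_inr a w hw⟩
    · exact ⟨hdisj.symm, hrange_inr, hrange_inl,
        by rintro v ⟨a, rfl⟩ w hw; exact hnbr_inr a w hw,
        by rintro v ⟨a, rfl⟩ w hw; exact hnbr_inl a w hw⟩
  obtain ⟨hVdisj, hVscard, hVtcard, hVsnbr, hVtnbr⟩ := hVfacts
  have hAVs : A ⊆ Vs := Set.inter_subset_right
  have hBVt : B ⊆ Vt := Set.diff_subset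
  have hABdisj : Disjoint A B := hVdisj.mono hAVs hBVt
  -- component facts
  have hsupp : ∀ v w, v ∈ c.supp → (colorSubgraph G χ 0).Adj v w → w ∈ c.supp := by
    intro v w hv hadj
    rw [SimpleGraph.ConnectedComponent.mem_supp_iff] at hv ⊢
    rw [← hv]
    exact (SimpleGraph.ConnectedComponent.connectedComponentMk_eq_of_adj hadj).symm
  have hTsupp : T ⊆ c.supp := by
    rw [← hTUS]; exact fun x hx => Set.mem_union_left _ (Set.mem_union_left _ hx)
  have hUsupp : U ⊆ c.supp := by
    rw [← hTUS]; exact fun x hx => Set.mem_union_left _ (Set.mem_union_right _ hx)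
  -- red degree bounds
  have hredA : ∀ v ∈ A, (((colorSubgraph G χ 0).neighborSet v ∩ B).ncard : ℝ) ≤ ξ ^ 2 * k' := by
    intro v hv
    rcases hv.1 with hvT | hvU
    · have hsub : (colorSubgraph G χ 0).neighborSet v ∩ B ⊆ (colorSubgraph G χ 0).neighborSet v ∩ T := by
        rintro w ⟨hw1, hw2⟩
        refine ⟨hw1, ?_⟩
        have hw3 : w ∈ c.supp := hsupp v w (hTsupp hvT) ((SimpleGraph.mem_neighborSet _ _ _).mp hw1)
        rw [← hTUS] at hw3
        rcases hw3 with (hw3 | hw3) | hw3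
        · exact hw3
        · exact absurd (Or.inl hw3) hw2.2
        · exact absurd (Or.inr hw3) hw2.2
      have h1 : (((colorSubgraph G χ 0).neighborSet v ∩ B).ncard : ℝ) ≤ (((colorSubgraph G χ 0).neighborSet v ∩ T).ncard : ℝ) := by
        exact_mod_cast Set.ncard_le_ncard hsub (Set.toFinite _)
      exact le_trans h1 (le_of_lt (hTfew v hvT))
    · have hempty : (colorSubgraph G χ 0).neighborSet v ∩ B = ∅ := by
        rw [Set.eq_empty_iff_forall_notMem]
        rintro w ⟨hw1, hw2⟩
        have hw3 : w ∈ c.supp := hsupp v w (hUsupp hvU) ((SimpleGraph.mem_neighborSet _ _ _).mp hw1)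
        rw [← hTUS] at hw3
        have hwT : w ∈ T := by
          rcases hw3 with (hw3 | hw3) | hw3
          · exact hw3
          · exact absurd (Or.inl hw3) hw2.2
          · exact absurd (Or.inr hw3) hw2.2
        have hadj : (colorSubgraph G χ 0).Adj w v :=
          ((SimpleGraph.mem_neighborSet _ _ _).mp hw1).symm
        exact Set.eq_empty_iff_forall_notMem.mp (hTnoU w hwT) v
          ⟨(SimpleGraph.mem_neighborSet _ _ _).mpr hadj, hvU⟩
      rw [hempty]
      simp
      positivity
  have hredB : ∀ w ∈ B, (((colorSubgraph G χ 0).neighborSet w ∩ A).ncard : ℝ) ≤ ξ ^ 2 * k' := by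
    intro w hw
    by_cases hwc : w ∈ c.supp
    · have hwT : w ∈ T := by
        rw [← hTUS] at hwc
        rcases hwc with (h1 | h1) | h1
        · exact h1
        · exact absurd (Or.inl h1) hw.2
        · exact absurd (Or.inr h1) hw.2
      have hsub : (colorSubgraph G χ 0).neighborSet w ∩ A ⊆ (colorSubgraph G χ 0).neighborSet w ∩ T := by
        rintro z ⟨hz1, hz2⟩
        refine ⟨hz1, ?_⟩
        rcases hz2.1 with hzT | hzU
        · exact hzT
        · exact absurd ⟨hz1, hzU⟩ (Set.eq_empty_iff_forall_notMem.mp (hTnoU w hwT) z)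
      have h1 : (((colorSubgraph G χ 0).neighborSet w ∩ A).ncard : ℝ) ≤ (((colorSubgraph G χ 0).neighborSet w ∩ T).ncard : ℝ) := by
        exact_mod_cast Set.ncard_le_ncard hsub (Set.toFinite _)
      exact le_trans h1 (le_of_lt (hTfew w hwT))
    · have hempty : (colorSubgraph G χ 0).neighborSet w ∩ A = ∅ := by
        rw [Set.eq_empty_iff_forall_notMem]
        rintro z ⟨hz1, hz2⟩
        have hzsupp : z ∈ c.supp := by
          rcases hz2.1 with h1 | h1
          · exact hTsupp h1
          · exact hUsupp h1
        exact hwc (hsupp z w hzsupp ((SimpleGraph.mem_neighborSet _ _ _).mp hz1).symm)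
      rw [hempty]
      simp
      positivity
  -- degree bounds in H
  have hfin2 : ∀ x : Fin 2, x ≠ 0 → x = 1 := by decide
  set γ : ℝ := (1/8 - ξ) * N + ξ ^ 2 * k' with hγdef
  have hdegHA : ∀ v ∈ A, (B.ncard : ℝ) - γ ≤ ((H.neighborSet v).ncard : ℝ) := by
    intro v hv
    have hkey := countHelper G H (colorSubgraph G χ 0) v B Vt hBVt (hVsnbr v (hAVs hv))
      N ((7/8 + ξ) * N) (ξ ^ 2 * k') hVtcard
      (by
        intro w hwB hadj hnred
        refine ⟨⟨hadj, hfin2 _ (fun h0 => hnred ⟨hadj, h0⟩)⟩, Or.inl ⟨hv, hwB⟩⟩)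
      (hredA v hv)
      (by rw [hN]; exact hGdeg v)
    rw [hγdef]
    linarith
  have hdegHB : ∀ w ∈ B, (A.ncard : ℝ) - γ ≤ ((H.neighborSet w).ncard : ℝ) := by
    intro w hw
    have hkey := countHelper G H (colorSubgraph G χ 0) w A Vs hAVs (hVtnbr w (hBVt hw))
      N ((7/8 + ξ) * N) (ξ ^ 2 * k') hVscard
      (by
        intro z hzA hadj hnred
        refine ⟨⟨hadj, hfin2 _ (fun h0 => hnred ⟨hadj, h0⟩)⟩, Or.inr ⟨hw, hzA⟩⟩)
      (hredB w hw)
      (by rw [hN]; exact hGdeg w)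
    rw [hγdef]
    linarith
  -- neighbor containment for H
  have hHA : ∀ v ∈ A, H.neighborSet v ⊆ B := by
    intro v hv w hw
    rcases hw.2 with ⟨_, hwB⟩ | ⟨hvB, _⟩
    · exact hwB
    · exact absurd hvB (Set.disjoint_left.mp hABdisj hv)
  have hHB : ∀ w ∈ B, H.neighborSet w ⊆ A := by
    intro w hw z hz
    rcases hz.2 with ⟨hwA, _⟩ | ⟨_, hzA⟩
    · exact absurd hwA (Set.disjoint_right.mp hABdisj hw)
    · exact hzA
  -- cardinalities
  have haR : (N:ℝ) ≤ 2 * (A.ncard : ℝ) := by linarith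
  have hbR : (N:ℝ) ≤ 2 * (B.ncard : ℝ) := by linarith
  have hγa : 2 * γ < (A.ncard : ℝ) := by
    rw [hγdef]
    have hξsq : ξ ^ 2 ≤ ξ := by nlinarith [mul_le_mul_of_nonneg_left hξ1 hξ0.le]
    have h1 : ξ ^ 2 * (2 * k') ≤ ξ ^ 2 * (N:ℝ) := mul_le_mul_of_nonneg_left h2k (sq_nonneg ξ)
    have h2 : ξ ^ 2 * (N:ℝ) ≤ ξ * (N:ℝ) := mul_le_mul_of_nonneg_right hξsq hNpos.le
    have h3 : (0:ℝ) < (1/4 + ξ) * (N:ℝ) := mul_pos (by linarith) hNpos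
    nlinarith
  have hγb : 2 * γ < (B.ncard : ℝ) := by
    rw [hγdef]
    have hξsq : ξ ^ 2 ≤ ξ := by nlinarith [mul_le_mul_of_nonneg_left hξ1 hξ0.le]
    have h1 : ξ ^ 2 * (2 * k') ≤ ξ ^ 2 * (N:ℝ) := mul_le_mul_of_nonneg_left h2k (sq_nonneg ξ)
    have h2 : ξ ^ 2 * (N:ℝ) ≤ ξ * (N:ℝ) := mul_le_mul_of_nonneg_right hξsq hNpos.le
    have h3 : (0:ℝ) < (1/4 + ξ) * (N:ℝ) := mul_pos (by linarith) hNpos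
    nlinarith
  set t : ℕ := N - N / 2 with htdef
  have htaN : N ≤ 2 * A.ncard := by exact_mod_cast haR
  have htbN : N ≤ 2 * B.ncard := by exact_mod_cast hbR
  have hta : t ≤ A.ncard := by omega
  have htb : t ≤ B.ncard := by omega
  have h2t : (N:ℝ) ≤ (2 * t : ℕ) := by
    have : N ≤ 2 * t := by omega
    exact_mod_cast this
  obtain ⟨M, hM1, hM2, hM3⟩ := auxConnMatching H A B hABdisj hHA hHB γ hdegHA hdegHB hγa hγb
    t hta htb
  refine ⟨M, hM1, hM2, ?_⟩
  rw [hM3, ← hN]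
  exact_mod_cast h2t
end

section
/- For every positive integer n there exists a bipartite graph H with bipartition {U, V}, |U| = |V| = 4n, and minimum degree δ(H) = 3n = (3/4)·|U|, together with a 2-edge-coloring of H, such that H contains no monochromatic cycle C_{4n}; that is, neither color class contains a cycle of length 4n. -/
open List in
lemma countP_split' {α} (l : List α) (p q : α → Bool) :
    l.countP q = l.countP (fun x => q x && p x) + l.countP (fun x => q x && !p x) := by
  induction l with
  | nil => simp
  | cons a l ih =>
    by_cases hq : q a <;> by_cases hp : p a <;>
      simp [List.countP_cons, hq, hp, ih] <;> omega

lemma countP_mem_finset {W : Type*} [DecidableEq W] (t : List W) (ht : t.Nodup) (T : Finset W)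
    (hT : ∀ x ∈ T, x ∈ t) : t.countP (fun x => x ∈ T) = T.card := by
  rw [List.countP_eq_length_filter]
  have h1 : (t.filter (fun x => x ∈ T)).Nodup := ht.filter _
  rw [← List.toFinset_card_of_nodup h1]
  congr 1
  ext x
  simp only [List.toFinset_filter, Finset.mem_filter, List.mem_toFinset, decide_eq_true_eq]
  exact ⟨fun h => h.2, fun h => ⟨hT x h, h⟩⟩

lemma walk_iff_on_support {W : Type*} {G : SimpleGraph W} (P : W → Prop) :
    ∀ {x y : W} (p : G.Walk x y), (∀ d ∈ p.darts, (P d.fst ↔ P d.snd)) →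
      ∀ z ∈ p.support, (P z ↔ P x) := by
  intro x y p
  induction p with
  | nil => intro _ z hz; simp at hz; subst hz; rfl
  | @cons a b c hadj q ih =>
    intro hd z hz
    rw [SimpleGraph.Walk.support_cons] at hz
    have h1 : (P a ↔ P b) := hd ⟨(a, b), hadj⟩ (by simp [SimpleGraph.Walk.darts_cons])
    rcases List.mem_cons.mp hz with rfl | hz
    · rfl
    · have := ih (fun d hdm => hd d (by simp [SimpleGraph.Walk.darts_cons, hdm])) z hz
      rw [this, h1]

open SimpleGraph in
lemma no_cycle_P4 {W : Type*} [DecidableEq W] {G : SimpleGraph W} {n : ℕ} (hn : 0 < n)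
    (A B C D : Finset W)
    (hAB : Disjoint A B) (hAC : Disjoint A C) (hAD : Disjoint A D)
    (hBC : Disjoint B C) (hBD : Disjoint B D) (hCD : Disjoint C D)
    (hA : A.card = n) (hB : B.card = n) (hC : C.card = n) (hD : D.card = n)
    {v : W} (w : G.Walk v v) (hc : w.IsCycle) (hl : w.length = 4 * n)
    (hdarts : ∀ d ∈ w.darts, (d.fst ∈ A ∧ d.snd ∈ C) ∨ (d.fst ∈ C ∧ d.snd ∈ A) ∨
      (d.fst ∈ A ∧ d.snd ∈ D) ∨ (d.fst ∈ D ∧ d.snd ∈ A) ∨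
      (d.fst ∈ B ∧ d.snd ∈ C) ∨ (d.fst ∈ C ∧ d.snd ∈ B)) : False := by
  classical
  set t : List W := w.support.tail with ht_def
  have ht_nodup : t.Nodup := hc.support_nodup
  have ht_len : t.length = 4 * n := by
    rw [ht_def, List.length_tail, w.length_support, hl]
    omega
  -- every element of the four blocks is in t
  have ht_snd : w.darts.map (·.snd) = t := w.map_snd_darts
  have hsub : ∀ x ∈ t, x ∈ A ∪ B ∪ C ∪ D := by
    intro x hx
    rw [← ht_snd] at hx
    obtain ⟨d, hd, rfl⟩ := List.mem_map.mp hx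
    rcases hdarts d hd with h | h | h | h | h | h <;> simp [h.2]
  have hScard : (A ∪ B ∪ C ∪ D).card = 4 * n := by
    rw [Finset.card_union_of_disjoint, Finset.card_union_of_disjoint,
      Finset.card_union_of_disjoint hAB]
    · omega
    · rw [Finset.disjoint_union_left]; exact ⟨hAC, hBC⟩
    · rw [Finset.disjoint_union_left, Finset.disjoint_union_left]
      exact ⟨⟨hAD, hBD⟩, hCD⟩
  have htS : t.toFinset = A ∪ B ∪ C ∪ D := by
    apply Finset.eq_of_subset_of_card_le
    · intro x hx; exact hsub x (List.mem_toFinset.mp hx)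
    · rw [hScard, ← ht_len]
      exact le_of_eq (List.toFinset_card_of_nodup ht_nodup).symm
  have hmem_t : ∀ T : Finset W, T ⊆ A ∪ B ∪ C ∪ D → ∀ x ∈ T, x ∈ t := by
    intro T hT x hx
    have : x ∈ t.toFinset := htS ▸ hT hx
    exact List.mem_toFinset.mp this
  -- in-counts
  have hcIn : ∀ T : Finset W, T ⊆ A ∪ B ∪ C ∪ D →
      w.darts.countP (fun d => d.snd ∈ T) = T.card := by
    intro T hT
    have : w.darts.countP (fun d => d.snd ∈ T)
        = (w.darts.map (·.snd)).countP (fun x => x ∈ T) := by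
      rw [List.countP_map]; rfl
    rw [this, ht_snd]
    exact countP_mem_finset t ht_nodup T (hmem_t T hT)
  -- out-counts: dropLast of support is a permutation of tail
  have htne : t ≠ [] := by intro h; rw [h] at ht_len; simp at ht_len; omega
  have hperm : w.support.dropLast.Perm t := by
    have h2 : w.support = v :: t := w.support_eq_cons
    have h5 : w.support.dropLast ++ [v] = w.support := by
      have h6 := List.dropLast_append_getLast (l := w.support) (by simp)
      rwa [w.getLast_support] at h6
    have h7 : (v :: t).Perm (v :: w.support.dropLast) := by
      conv_lhs => rw [← h2, ← h5]
      exact List.perm_append_singleton v _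
    exact (h7.cons_inv).symm
  have hcOut : ∀ T : Finset W, T ⊆ A ∪ B ∪ C ∪ D →
      w.darts.countP (fun d => d.fst ∈ T) = T.card := by
    intro T hT
    have h0 : w.darts.countP (fun d => d.fst ∈ T)
        = (w.darts.map (·.fst)).countP (fun x => x ∈ T) := by
      rw [List.countP_map]; rfl
    rw [h0, w.map_fst_darts, hperm.countP_eq]
    exact countP_mem_finset t ht_nodup T (hmem_t T hT)
  have hsubA : A ⊆ A ∪ B ∪ C ∪ D := by intro x hx; simp [hx]
  have hsubD : D ⊆ A ∪ B ∪ C ∪ D := by intro x hx; simp [hx]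
  -- step 1 : every dart with snd ∈ A has fst ∈ D
  have step1 : ∀ d ∈ w.darts, d.snd ∈ A → d.fst ∈ D := by
    have hfwd : ∀ d ∈ w.darts, (decide (d.fst ∈ D) : Bool) = true → decide (d.snd ∈ A) = true := by
      intro d hd hfD
      simp only [decide_eq_true_eq] at hfD ⊢
      rcases hdarts d hd with h | h | h | h | h | h
      · exact absurd hfD (Finset.disjoint_left.mp hAD h.1)
      · exact absurd hfD (Finset.disjoint_left.mp hCD h.1)
      · exact absurd hfD (Finset.disjoint_left.mp hAD h.1)
      · exact h.2
      · exact absurd hfD (Finset.disjoint_left.mp hBD h.1)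
      · exact absurd hfD (Finset.disjoint_left.mp hCD h.1)
    have hsplit := countP_split' w.darts (fun d => d.fst ∈ D) (fun d => d.snd ∈ A)
    have heq1 : w.darts.countP (fun d => decide (d.snd ∈ A) && decide (d.fst ∈ D))
        = w.darts.countP (fun d => d.fst ∈ D) := by
      apply List.countP_congr
      intro d hd
      constructor
      · intro h; simp only [Bool.and_eq_true] at h; exact h.2
      · intro h; simp only [Bool.and_eq_true]; exact ⟨hfwd d hd h, h⟩
    have hA' := hcIn A hsubA
    have hD' := hcOut D hsubD
    have hzero : w.darts.countP (fun d => decide (d.snd ∈ A) && !decide (d.fst ∈ D)) = 0 := by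
      omega
    intro d hd hsA
    have := List.countP_eq_zero.mp hzero d hd
    simp only [Bool.and_eq_true, Bool.not_eq_true', decide_eq_false_iff_not,
      decide_eq_true_eq, not_and] at this
    by_contra hfD
    exact this hsA hfD
  -- step 2 : every dart with fst ∈ A has snd ∈ D
  have step2 : ∀ d ∈ w.darts, d.fst ∈ A → d.snd ∈ D := by
    have hfwd : ∀ d ∈ w.darts, (decide (d.snd ∈ D) : Bool) = true → decide (d.fst ∈ A) = true := by
      intro d hd hfD
      simp only [decide_eq_true_eq] at hfD ⊢
      rcases hdarts d hd with h | h | h | h | h | h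
      · exact absurd hfD (Finset.disjoint_left.mp hCD h.2)
      · exact absurd hfD (Finset.disjoint_left.mp hAD h.2)
      · exact h.1
      · exact absurd hfD (Finset.disjoint_left.mp hAD h.2)
      · exact absurd hfD (Finset.disjoint_left.mp hCD h.2)
      · exact absurd hfD (Finset.disjoint_left.mp hBD h.2)
    have hsplit := countP_split' w.darts (fun d => d.snd ∈ D) (fun d => d.fst ∈ A)
    have heq1 : w.darts.countP (fun d => decide (d.fst ∈ A) && decide (d.snd ∈ D))
        = w.darts.countP (fun d => d.snd ∈ D) := by
      apply List.countP_congr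
      intro d hd
      constructor
      · intro h; simp only [Bool.and_eq_true] at h; exact h.2
      · intro h; simp only [Bool.and_eq_true]; exact ⟨hfwd d hd h, h⟩
    have hA' := hcOut A hsubA
    have hD' := hcIn D hsubD
    have hzero : w.darts.countP (fun d => decide (d.fst ∈ A) && !decide (d.snd ∈ D)) = 0 := by
      omega
    intro d hd hsA
    have := List.countP_eq_zero.mp hzero d hd
    simp only [Bool.and_eq_true, Bool.not_eq_true', decide_eq_false_iff_not,
      decide_eq_true_eq, not_and] at this
    by_contra hfD
    exact this hsA hfD
  -- the invariant
  have hinv : ∀ d ∈ w.darts, ((d.fst ∈ A ∨ d.fst ∈ D) ↔ (d.snd ∈ A ∨ d.snd ∈ D)) := by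
    intro d hd
    rcases hdarts d hd with h | h | h | h | h | h
    · exact absurd (step2 d hd h.1) (Finset.disjoint_left.mp hCD h.2)
    · exact absurd (step1 d hd h.2) (Finset.disjoint_left.mp hCD h.1)
    · simp [h.1, h.2]
    · simp [h.1, h.2]
    · constructor
      · rintro (hx | hx)
        · exact absurd hx (Finset.disjoint_right.mp hAB h.1)
        · exact absurd hx (Finset.disjoint_left.mp hBD h.1)
      · rintro (hx | hx)
        · exact absurd hx (Finset.disjoint_right.mp hAC h.2)
        · exact absurd hx (Finset.disjoint_left.mp hCD h.2)
    · constructor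
      · rintro (hx | hx)
        · exact absurd hx (Finset.disjoint_right.mp hAC h.1)
        · exact absurd hx (Finset.disjoint_left.mp hCD h.1)
      · rintro (hx | hx)
        · exact absurd hx (Finset.disjoint_right.mp hAB h.2)
        · exact absurd hx (Finset.disjoint_left.mp hBD h.2)
  have hkey := walk_iff_on_support (fun x => x ∈ A ∨ x ∈ D) w hinv
  obtain ⟨b0, hb0⟩ := Finset.card_pos.mp (by omega : 0 < B.card)
  obtain ⟨d0, hd0⟩ := Finset.card_pos.mp (by omega : 0 < D.card)
  have hb0t : b0 ∈ w.support := by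
    have : b0 ∈ t := hmem_t B (by intro x hx; simp [hx]) b0 hb0
    rw [w.support_eq_cons]; exact List.mem_cons_of_mem _ this
  have hd0t : d0 ∈ w.support := by
    have : d0 ∈ t := hmem_t D (by intro x hx; simp [hx]) d0 hd0
    rw [w.support_eq_cons]; exact List.mem_cons_of_mem _ this
  have h1 := hkey b0 hb0t
  have h2 := hkey d0 hd0t
  rw [← h2] at h1
  have : b0 ∈ A ∨ b0 ∈ D := h1.mpr (Or.inr hd0)
  rcases this with hx | hx
  · exact Finset.disjoint_right.mp hAB hb0 hx
  · exact Finset.disjoint_left.mp hBD hb0 hx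

def Blk (n c : ℕ) : Finset (Fin (4 * n)) :=
  Finset.univ.filter (fun u => u.val / n = c)

lemma div_lt_four {n : ℕ} (hn : 0 < n) (u : Fin (4 * n)) : u.val / n < 4 :=
  Nat.div_lt_iff_lt_mul hn |>.mpr (by have := u.isLt; omega)

lemma mem_Blk {n c : ℕ} {u : Fin (4 * n)} : u ∈ Blk n c ↔ u.val / n = c := by
  simp [Blk]

lemma card_Blk {n : ℕ} (hn : 0 < n) {c : ℕ} (hc : c < 4) : (Blk n c).card = n := by
  classical
  have h : (Blk n c).card = (Finset.univ : Finset (Fin n)).card := by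
    apply Finset.card_bij' (i := fun u _ => (⟨u.val % n, Nat.mod_lt _ hn⟩ : Fin n))
      (j := fun i _ => (⟨c * n + i.val, by have := i.isLt; nlinarith⟩ : Fin (4 * n)))
    case hi => intro u hu; exact Finset.mem_univ _
    case hj =>
      intro i _
      rw [mem_Blk]
      simp only
      rw [Nat.mul_comm, Nat.mul_add_div hn, Nat.div_eq_of_lt i.isLt, Nat.add_zero]
    case left_inv =>
      intro u hu
      rw [mem_Blk] at hu
      apply Fin.ext
      simp only
      have h2 := Nat.div_add_mod u.val n
      rw [hu] at h2
      rw [Nat.mul_comm c n]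
      omega
    case right_inv =>
      intro i _
      apply Fin.ext
      simp only
      rw [Nat.mul_comm, Nat.mul_add_mod, Nat.mod_eq_of_lt i.isLt]
  simpa using h

lemma Blk_disjoint {n : ℕ} {c c' : ℕ} (h : c ≠ c') : Disjoint (Blk n c) (Blk n c') := by
  rw [Finset.disjoint_left]
  intro u hu hu'
  rw [mem_Blk] at hu hu'
  exact h (hu ▸ hu')

def Hgraph (n : ℕ) : SimpleGraph (Fin (4 * n) ⊕ Fin (4 * n)) where
  Adj x y := match x, y with
    | Sum.inl u, Sum.inr v => (u.val / n + 2) % 4 ≠ v.val / n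
    | Sum.inr v, Sum.inl u => (u.val / n + 2) % 4 ≠ v.val / n
    | _, _ => False
  symm := ⟨by rintro (u | u) (v | v) h <;> simp_all⟩
  loopless := ⟨by rintro (u | u) h <;> simp_all⟩

def blkSum (n : ℕ) : (Fin (4 * n) ⊕ Fin (4 * n)) → ℕ :=
  Sum.elim (fun u => u.val / n) (fun v => v.val / n)

def chi (n : ℕ) : Sym2 (Fin (4 * n) ⊕ Fin (4 * n)) → Fin 2 :=
  Sym2.lift ⟨fun x y => if (blkSum n x + blkSum n y) % 4 ≤ 1 then 0 else 1,
    fun x y => by dsimp only; rw [Nat.add_comm]⟩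

lemma Hgraph_le (n : ℕ) :
    Hgraph n ≤ completeBipartiteGraph (Fin (4 * n)) (Fin (4 * n)) := by
  rintro (u | u) (v | v) h <;> simp_all [Hgraph, completeBipartiteGraph]

lemma Hdeg (n : ℕ) (hn : 0 < n) [DecidableRel (Hgraph n).Adj] (x : Fin (4 * n) ⊕ Fin (4 * n)) :
    (Hgraph n).degree x = 3 * n := by
  classical
  have key : ∀ c : ℕ, c < 4 →
      (Finset.univ.filter (fun v : Fin (4 * n) => ¬ (v.val / n = c))).card = 3 * n := by
    intro c hc
    rw [Finset.filter_not, Finset.card_sdiff_of_subset (Finset.filter_subset _ _)]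
    have : (Finset.univ.filter (fun v : Fin (4 * n) => v.val / n = c)) = Blk n c := rfl
    rw [this, card_Blk hn hc]
    simp only [Finset.card_univ, Fintype.card_fin]
    omega
  rw [SimpleGraph.degree]
  cases x with
  | inl u =>
    have him : (Hgraph n).neighborFinset (Sum.inl u)
        = (Finset.univ.filter (fun v : Fin (4 * n) =>
            ¬ (v.val / n = (u.val / n + 2) % 4))).image Sum.inr := by
      ext y
      cases y with
      | inl w =>
        simp only [SimpleGraph.mem_neighborFinset, Finset.mem_image]
        constructor
        · intro h; exact absurd h (by simp [Hgraph])
        · rintro ⟨v, _, h⟩; exact absurd h (by simp)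
      | inr v =>
        simp only [SimpleGraph.mem_neighborFinset, Finset.mem_image, Finset.mem_filter,
          Finset.mem_univ, true_and]
        constructor
        · intro h
          exact ⟨v, fun hh => (by exact h (hh ▸ rfl) : False), rfl⟩
        · rintro ⟨v', hv', h⟩
          cases Sum.inr_injective h
          show (u.val / n + 2) % 4 ≠ v.val / n
          exact fun hh => hv' hh.symm
    rw [him, Finset.card_image_of_injective _ Sum.inr_injective]
    exact key _ (Nat.mod_lt _ (by norm_num))
  | inr v =>
    have hc4 : (v.val / n + 2) % 4 < 4 := Nat.mod_lt _ (by norm_num)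
    have him : (Hgraph n).neighborFinset (Sum.inr v)
        = (Finset.univ.filter (fun u : Fin (4 * n) =>
            ¬ (u.val / n = (v.val / n + 2) % 4))).image Sum.inl := by
      ext y
      cases y with
      | inr w =>
        simp only [SimpleGraph.mem_neighborFinset, Finset.mem_image]
        constructor
        · intro h; exact absurd h (by simp [Hgraph])
        · rintro ⟨u, _, h⟩; exact absurd h (by simp)
      | inl u =>
        simp only [SimpleGraph.mem_neighborFinset, Finset.mem_image, Finset.mem_filter,
          Finset.mem_univ, true_and]
        have key2 : ∀ a b : ℕ, a < 4 → b < 4 → (((a + 2) % 4 ≠ b) ↔ ¬ (a = (b + 2) % 4)) := by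
          intro a b ha hb
          omega
        have hiff : ((u.val / n + 2) % 4 ≠ v.val / n) ↔ ¬ (u.val / n = (v.val / n + 2) % 4) :=
          key2 _ _ (div_lt_four hn u) (div_lt_four hn v)
        constructor
        · intro h
          exact ⟨u, hiff.mp h, rfl⟩
        · rintro ⟨u', hu', h⟩
          cases Sum.inl_injective h
          exact hiff.mpr hu'
    rw [him, Finset.card_image_of_injective _ Sum.inl_injective]
    exact key _ hc4

def UB (n c : ℕ) : Finset (Fin (4 * n) ⊕ Fin (4 * n)) := (Blk n c).map Function.Embedding.inl
def VB (n c : ℕ) : Finset (Fin (4 * n) ⊕ Fin (4 * n)) := (Blk n c).map Function.Embedding.inr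

lemma mem_UB {n c : ℕ} {x : Fin (4 * n) ⊕ Fin (4 * n)} :
    x ∈ UB n c ↔ ∃ u : Fin (4 * n), u.val / n = c ∧ Sum.inl u = x := by
  simp [UB, Finset.mem_map, mem_Blk, Function.Embedding.inl, Function.Embedding.coeFn_mk]
  exact Iff.rfl

lemma mem_VB {n c : ℕ} {x : Fin (4 * n) ⊕ Fin (4 * n)} :
    x ∈ VB n c ↔ ∃ u : Fin (4 * n), u.val / n = c ∧ Sum.inr u = x := by
  simp [VB, Finset.mem_map, mem_Blk, Function.Embedding.inr, Function.Embedding.coeFn_mk]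
  exact Iff.rfl

lemma card_UB {n : ℕ} (hn : 0 < n) {c : ℕ} (hc : c < 4) : (UB n c).card = n := by
  rw [UB, Finset.card_map, card_Blk hn hc]

lemma card_VB {n : ℕ} (hn : 0 < n) {c : ℕ} (hc : c < 4) : (VB n c).card = n := by
  rw [VB, Finset.card_map, card_Blk hn hc]

lemma UB_disj {n c c' : ℕ} (h : c ≠ c') : Disjoint (UB n c) (UB n c') :=
  (Finset.disjoint_map _).mpr (Blk_disjoint h)

lemma VB_disj {n c c' : ℕ} (h : c ≠ c') : Disjoint (VB n c) (VB n c') :=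
  (Finset.disjoint_map _).mpr (Blk_disjoint h)

lemma UV_disj {n c c' : ℕ} : Disjoint (UB n c) (VB n c') :=
  Finset.disjoint_map_inl_map_inr _ _

lemma blkSum_inl {n : ℕ} (u : Fin (4 * n)) : blkSum n (Sum.inl u) = u.val / n := rfl
lemma blkSum_inr {n : ℕ} (u : Fin (4 * n)) : blkSum n (Sum.inr u) = u.val / n := rfl

lemma walk_eq_on_support {W : Type*} {G : SimpleGraph W} (f : W → ℕ)
    (hf : ∀ a b, G.Adj a b → f a = f b) :
    ∀ {x y : W} (p : G.Walk x y), ∀ z ∈ p.support, f z = f x := by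
  intro x y p
  induction p with
  | nil => intro z hz; simp at hz; subst hz; rfl
  | @cons a b c hadj q ih =>
    intro z hz
    rw [SimpleGraph.Walk.support_cons] at hz
    rcases List.mem_cons.mp hz with rfl | hz
    · rfl
    · rw [ih z hz, hf a b hadj]

/-- The key application: a cycle of length `4n` whose darts all join the
`m`-th and `(m+1) mod 4`-th blocks in the pattern `A-C, A-D, B-C` is impossible. -/
lemma no_mono {n : ℕ} (hn : 0 < n) {G : SimpleGraph (Fin (4 * n) ⊕ Fin (4 * n))}
    {m : ℕ} (hm : m < 4) {v : Fin (4 * n) ⊕ Fin (4 * n)}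
    (w : G.Walk v v) (hc : w.IsCycle) (hl : w.length = 4 * n)
    (hd : ∀ d ∈ w.darts, ∃ (u : Fin (4 * n)) (v' : Fin (4 * n)),
      ((d.fst = Sum.inl u ∧ d.snd = Sum.inr v') ∨ (d.fst = Sum.inr v' ∧ d.snd = Sum.inl u)) ∧
      ((u.val / n = m ∧ v'.val / n = m) ∨
       (u.val / n = m ∧ v'.val / n = (m + 1) % 4) ∨
       (u.val / n = (m + 1) % 4 ∧ v'.val / n = m))) : False := by
  classical
  have hm' : (m + 1) % 4 ≠ m := by omega
  have hm4 : (m + 1) % 4 < 4 := by omega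
  apply no_cycle_P4 hn (UB n m) (UB n ((m + 1) % 4)) (VB n m) (VB n ((m + 1) % 4))
    (UB_disj (Ne.symm hm')) UV_disj UV_disj UV_disj UV_disj (VB_disj (Ne.symm hm'))
    (card_UB hn hm) (card_UB hn hm4) (card_VB hn hm) (card_VB hn hm4) w hc hl
  intro d hdm
  obtain ⟨u, v', hor, hblk⟩ := hd d hdm
  rcases hor with ⟨h1, h2⟩ | ⟨h1, h2⟩
  · rcases hblk with ⟨ha, hb⟩ | ⟨ha, hb⟩ | ⟨ha, hb⟩
    · exact Or.inl ⟨h1 ▸ mem_UB.mpr ⟨u, ha, rfl⟩, h2 ▸ mem_VB.mpr ⟨v', hb, rfl⟩⟩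
    · exact Or.inr (Or.inr (Or.inl
        ⟨h1 ▸ mem_UB.mpr ⟨u, ha, rfl⟩, h2 ▸ mem_VB.mpr ⟨v', hb, rfl⟩⟩))
    · exact Or.inr (Or.inr (Or.inr (Or.inr (Or.inl
        ⟨h1 ▸ mem_UB.mpr ⟨u, ha, rfl⟩, h2 ▸ mem_VB.mpr ⟨v', hb, rfl⟩⟩))))
  · rcases hblk with ⟨ha, hb⟩ | ⟨ha, hb⟩ | ⟨ha, hb⟩
    · exact Or.inr (Or.inl ⟨h1 ▸ mem_VB.mpr ⟨v', hb, rfl⟩, h2 ▸ mem_UB.mpr ⟨u, ha, rfl⟩⟩)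
    · exact Or.inr (Or.inr (Or.inr (Or.inl
        ⟨h1 ▸ mem_VB.mpr ⟨v', hb, rfl⟩, h2 ▸ mem_UB.mpr ⟨u, ha, rfl⟩⟩)))
    · exact Or.inr (Or.inr (Or.inr (Or.inr (Or.inr
        ⟨h1 ▸ mem_VB.mpr ⟨v', hb, rfl⟩, h2 ▸ mem_UB.mpr ⟨u, ha, rfl⟩⟩))))

lemma chi_eval {n : ℕ} (u v : Fin (4 * n)) :
    chi n s(Sum.inl u, Sum.inr v)
      = if (u.val / n + v.val / n) % 4 ≤ 1 then 0 else 1 := by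
  rw [chi, Sym2.lift_mk]
  rfl

lemma color_adj {n : ℕ} (i : Fin 2) {x y : Fin (4 * n) ⊕ Fin (4 * n)}
    (h : (colorSubgraph (Hgraph n) (chi n) i).Adj x y) :
    ∃ (u : Fin (4 * n)) (v' : Fin (4 * n)),
      ((x = Sum.inl u ∧ y = Sum.inr v') ∨ (x = Sum.inr v' ∧ y = Sum.inl u)) ∧
      (u.val / n + 2) % 4 ≠ v'.val / n ∧
      ((i = 0 ∧ (u.val / n + v'.val / n) % 4 ≤ 1) ∨
       (i = 1 ∧ ¬ (u.val / n + v'.val / n) % 4 ≤ 1)) := by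
  obtain ⟨hadj, hcol⟩ : (Hgraph n).Adj x y ∧ chi n s(x, y) = i := h
  cases x with
  | inl u =>
    cases y with
    | inl u' => exact absurd hadj (by simp [Hgraph])
    | inr v' =>
      refine ⟨u, v', Or.inl ⟨rfl, rfl⟩, hadj, ?_⟩
      rw [chi_eval] at hcol
      by_cases hcond : (u.val / n + v'.val / n) % 4 ≤ 1
      · rw [if_pos hcond] at hcol; exact Or.inl ⟨hcol.symm, hcond⟩
      · rw [if_neg hcond] at hcol; exact Or.inr ⟨hcol.symm, hcond⟩
  | inr v' =>
    cases y with
    | inr u' => exact absurd hadj (by simp [Hgraph])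
    | inl u =>
      refine ⟨u, v', Or.inr ⟨rfl, rfl⟩, hadj, ?_⟩
      have : chi n s(Sum.inr v', Sum.inl u) = chi n s(Sum.inl u, Sum.inr v') := by
        rw [Sym2.eq_swap]
      rw [this, chi_eval] at hcol
      by_cases hcond : (u.val / n + v'.val / n) % 4 ≤ 1
      · rw [if_pos hcond] at hcol; exact Or.inl ⟨hcol.symm, hcond⟩
      · rw [if_neg hcond] at hcol; exact Or.inr ⟨hcol.symm, hcond⟩

open scoped Classical

/-- For every positive `n` there is a bipartite graph `H` with parts of size `4n`,
minimum degree exactly `3n`, and a 2-edge-coloring of `H` with no monochromatic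
cycle `C_{4n}`. -/
theorem extremal_example_min_degree (n : ℕ) (hn : 0 < n) :
    ∃ (H : SimpleGraph (Fin (4 * n) ⊕ Fin (4 * n)))
      (χ : Sym2 (Fin (4 * n) ⊕ Fin (4 * n)) → Fin 2),
      H ≤ completeBipartiteGraph (Fin (4 * n)) (Fin (4 * n)) ∧
      H.minDegree = 3 * n ∧
      ∀ i : Fin 2, ¬ HasCycleLength (colorSubgraph H χ i) (4 * n) := by
  have hpos : 0 < 4 * n := by omega
  refine ⟨Hgraph n, chi n, Hgraph_le n, ?_, ?_⟩
  · -- minimum degree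
    have hne : Nonempty (Fin (4 * n) ⊕ Fin (4 * n)) := ⟨Sum.inl ⟨0, hpos⟩⟩
    apply le_antisymm
    · have := SimpleGraph.minDegree_le_degree (Hgraph n) (Sum.inl ⟨0, hpos⟩)
      rwa [Hdeg n hn] at this
    · exact SimpleGraph.le_minDegree_of_forall_le_degree _ _
        (fun x => le_of_eq (Hdeg n hn x).symm)
  · rintro i ⟨v, w, hc, hl⟩
    have hblt : ∀ x : Fin (4 * n) ⊕ Fin (4 * n), blkSum n x < 4 := by
      rintro (u | u) <;> exact div_lt_four hn u
    fin_cases i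
    · -- color 0 : fiber function x ↦ (blk x) / 2
      set f : (Fin (4 * n) ⊕ Fin (4 * n)) → ℕ := fun x => blkSum n x / 2 with hf_def
      have hpres : ∀ a b, (colorSubgraph (Hgraph n) (chi n) 0).Adj a b → f a = f b := by
        intro a b hab
        obtain ⟨u, v', hor, hne2, hcol⟩ := color_adj 0 hab
        have hcol' : (u.val / n + v'.val / n) % 4 ≤ 1 := by
          rcases hcol with ⟨_, h⟩ | ⟨h, _⟩
          · exact h
          · exact absurd h (by decide)
        have harith : ∀ p q : ℕ, p < 4 → q < 4 → (p + 2) % 4 ≠ q → (p + q) % 4 ≤ 1 →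
            p / 2 = q / 2 := by intro p q hp hq h1 h2; omega
        have := harith _ _ (div_lt_four hn u) (div_lt_four hn v') hne2 hcol'
        rcases hor with ⟨rfl, rfl⟩ | ⟨rfl, rfl⟩ <;> simp only [hf_def, blkSum_inl, blkSum_inr] <;> omega
      have hsupp := walk_eq_on_support f hpres w
      set m : ℕ := 2 * (blkSum n v / 2) with hm_def
      have hm : m < 4 := by have := hblt v; omega
      apply no_mono hn hm w hc hl
      intro d hdm
      obtain ⟨u, v', hor, hne2, hcol⟩ := color_adj 0 d.adj
      have hcol' : (u.val / n + v'.val / n) % 4 ≤ 1 := by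
        rcases hcol with ⟨_, h⟩ | ⟨h, _⟩
        · exact h
        · exact absurd h (by decide)
      have hfst : f d.fst = f v :=
        hsupp d.fst (SimpleGraph.Walk.dart_fst_mem_support_of_mem_darts w hdm)
      have hsnd : f d.snd = f v :=
        hsupp d.snd (SimpleGraph.Walk.dart_snd_mem_support_of_mem_darts w hdm)
      refine ⟨u, v', hor, ?_⟩
      have hu4 := div_lt_four hn u
      have hv4 := div_lt_four hn v'
      have hv4' := hblt v
      have hfa : u.val / n / 2 = blkSum n v / 2 ∧ v'.val / n / 2 = blkSum n v / 2 := by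
        rcases hor with ⟨h1, h2⟩ | ⟨h1, h2⟩ <;>
          rw [h1] at hfst <;> rw [h2] at hsnd <;>
          simp only [hf_def, blkSum_inl, blkSum_inr] at hfst hsnd <;>
          exact ⟨by omega, by omega⟩
      obtain ⟨hfa1, hfa2⟩ := hfa
      rw [hm_def]
      omega
    · -- color 1 : fiber function x ↦ ((blk x + 1) % 4) / 2
      set f : (Fin (4 * n) ⊕ Fin (4 * n)) → ℕ := fun x => ((blkSum n x + 1) % 4) / 2 with hf_def
      have hpres : ∀ a b, (colorSubgraph (Hgraph n) (chi n) 1).Adj a b → f a = f b := by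
        intro a b hab
        obtain ⟨u, v', hor, hne2, hcol⟩ := color_adj 1 hab
        have hcol' : ¬ (u.val / n + v'.val / n) % 4 ≤ 1 := by
          rcases hcol with ⟨h, _⟩ | ⟨_, h⟩
          · exact absurd h (by decide)
          · exact h
        have harith : ∀ p q : ℕ, p < 4 → q < 4 → (p + 2) % 4 ≠ q → ¬ (p + q) % 4 ≤ 1 →
            ((p + 1) % 4) / 2 = ((q + 1) % 4) / 2 := by intro p q hp hq h1 h2; omega
        have := harith _ _ (div_lt_four hn u) (div_lt_four hn v') hne2 hcol'
        rcases hor with ⟨rfl, rfl⟩ | ⟨rfl, rfl⟩ <;> simp only [hf_def, blkSum_inl, blkSum_inr] <;> omega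
      have hsupp := walk_eq_on_support f hpres w
      set m : ℕ := 3 - 2 * (((blkSum n v + 1) % 4) / 2) with hm_def
      have hm : m < 4 := by omega
      apply no_mono hn hm w hc hl
      intro d hdm
      obtain ⟨u, v', hor, hne2, hcol⟩ := color_adj 1 d.adj
      have hcol' : ¬ (u.val / n + v'.val / n) % 4 ≤ 1 := by
        rcases hcol with ⟨h, _⟩ | ⟨_, h⟩
        · exact absurd h (by decide)
        · exact h
      have hfst : f d.fst = f v :=
        hsupp d.fst (SimpleGraph.Walk.dart_fst_mem_support_of_mem_darts w hdm)
      have hsnd : f d.snd = f v :=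
        hsupp d.snd (SimpleGraph.Walk.dart_snd_mem_support_of_mem_darts w hdm)
      refine ⟨u, v', hor, ?_⟩
      have hu4 := div_lt_four hn u
      have hv4 := div_lt_four hn v'
      have hv4' := hblt v
      have hfa : ((u.val / n + 1) % 4) / 2 = ((blkSum n v + 1) % 4) / 2 ∧
          ((v'.val / n + 1) % 4) / 2 = ((blkSum n v + 1) % 4) / 2 := by
        rcases hor with ⟨h1, h2⟩ | ⟨h1, h2⟩ <;>
          rw [h1] at hfst <;> rw [h2] at hsnd <;>
          simp only [hf_def, blkSum_inl, blkSum_inr] at hfst hsnd <;>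
          exact ⟨by omega, by omega⟩
      obtain ⟨hfa1, hfa2⟩ := hfa
      have harith2 : ∀ p q r : ℕ, p < 4 → q < 4 → r < 4 → (p + 2) % 4 ≠ q →
          ¬ (p + q) % 4 ≤ 1 → ((p + 1) % 4) / 2 = ((r + 1) % 4) / 2 →
          ((q + 1) % 4) / 2 = ((r + 1) % 4) / 2 →
          (p = 3 - 2 * (((r + 1) % 4) / 2) ∧ q = 3 - 2 * (((r + 1) % 4) / 2)) ∨
          (p = 3 - 2 * (((r + 1) % 4) / 2) ∧ q = (3 - 2 * (((r + 1) % 4) / 2) + 1) % 4) ∨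
          (p = (3 - 2 * (((r + 1) % 4) / 2) + 1) % 4 ∧ q = 3 - 2 * (((r + 1) % 4) / 2)) := by
        intro p q r hp hq hr h1 h2 h3 h4
        omega
      rw [hm_def]
      exact harith2 _ _ _ (div_lt_four hn u) (div_lt_four hn v') (hblt v) hne2 hcol' hfa1 hfa2
end
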